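/- arXiv:1508.04644 — 7 statements merged into one kernel-verified Lean document; each statement's English description precedes it below -/
import Mathlib

section
/- Let U, V, W ≅ ℂ². The set of linear maps Φ : U → V ⊗ W which, after suitable changes of basis of U, V, W, take the form |1⟩ ↦ |1⟩⊗|1⟩ and |2⟩ ↦ |2⟩⊗|2⟩, is a dense open subset of Hom(U, V ⊗ W). Equivalently, identifying Φ with a pair of 2×2 matrices (A,B) via Φ|1⟩ = Σ A(i,j)|ij⟩, Φ|2⟩ = Σ B(i,j)|ij⟩, the set of pairs with det(A) ≠ 0, (tr(A⁻¹B))² − 4 det(A⁻¹B) ≠ 0, and both off-diagonal entries of A⁻¹B nonzero, consists of such maps and is open dense in M₂(ℂ) × M₂(ℂ). -/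
open scoped TensorProduct

/-- The linear map `ℂ² → ℂ² ⊗ ℂ²` determined by a pair of 2×2 matrices `(A, B)`:
`e₀ ↦ Σ A j k • (e j ⊗ e k)` and `e₁ ↦ Σ B j k • (e j ⊗ e k)`. -/
noncomputable def PhiOf (A B : Matrix (Fin 2) (Fin 2) ℂ) :
    (Fin 2 → ℂ) →ₗ[ℂ] (Fin 2 → ℂ) ⊗[ℂ] (Fin 2 → ℂ) :=
  (Pi.basisFun ℂ (Fin 2)).constr ℂ fun i =>
    ∑ j : Fin 2, ∑ k : Fin 2,
      (if i = 0 then A j k else B j k) •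
        ((Pi.basisFun ℂ (Fin 2)) j ⊗ₜ[ℂ] (Pi.basisFun ℂ (Fin 2)) k)

/-- The set of pairs `(A,B)` with `det A ≠ 0`, `A⁻¹B` having distinct eigenvalues, and
both off-diagonal entries of `A⁻¹B` nonzero. -/
def GoodPairs : Set (Matrix (Fin 2) (Fin 2) ℂ × Matrix (Fin 2) (Fin 2) ℂ) :=
  {AB | AB.1.det ≠ 0 ∧
    (Matrix.trace (AB.1⁻¹ * AB.2)) ^ 2 - 4 * (AB.1⁻¹ * AB.2).det ≠ 0 ∧
    (AB.1⁻¹ * AB.2) 0 1 ≠ 0 ∧ (AB.1⁻¹ * AB.2) 1 0 ≠ 0}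

section Aux

open Matrix Polynomial

private abbrev Mat := Matrix (Fin 2) (Fin 2) ℂ

private lemma phiOf_apply (A B : Matrix (Fin 2) (Fin 2) ℂ) (u : Fin 2 → ℂ) :
    PhiOf A B u = ∑ j : Fin 2, ∑ k : Fin 2,
      (u 0 * A j k + u 1 * B j k) • ((Pi.basisFun ℂ (Fin 2)) j ⊗ₜ[ℂ] (Pi.basisFun ℂ (Fin 2)) k) := by
  rw [PhiOf, Module.Basis.constr_apply_fintype]
  simp only [Pi.basisFun_equivFun, LinearEquiv.refl_apply, Fin.sum_univ_two, if_pos rfl,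
    if_neg (show (1 : Fin 2) ≠ 0 by decide), if_true]
  module

private lemma tmul_expand (v w : Fin 2 → ℂ) :
    v ⊗ₜ[ℂ] w = ∑ j : Fin 2, ∑ k : Fin 2,
      (v j * w k) • ((Pi.basisFun ℂ (Fin 2)) j ⊗ₜ[ℂ] (Pi.basisFun ℂ (Fin 2)) k) := by
  conv_lhs => rw [← Module.Basis.sum_repr (Pi.basisFun ℂ (Fin 2)) v,
    ← Module.Basis.sum_repr (Pi.basisFun ℂ (Fin 2)) w]
  simp only [Pi.basisFun_repr, Fin.sum_univ_two, TensorProduct.add_tmul, TensorProduct.tmul_add,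
    TensorProduct.smul_tmul_smul]
  module

private lemma exists_basis_cols (P : Matrix (Fin 2) (Fin 2) ℂ) (hP : P.det ≠ 0) :
    ∃ b : Module.Basis (Fin 2) ℂ (Fin 2 → ℂ), ∀ i, b i = fun j => P j i := by
  have h : Invertible P := P.invertibleOfIsUnitDet (isUnit_iff_ne_zero.mpr hP)
  refine ⟨(Pi.basisFun ℂ (Fin 2)).map (P.toLinearEquiv' h), fun i => ?_⟩
  ext j
  simp [Matrix.toLinearEquiv', Matrix.mulVec_single]

private lemma mem_goodPairs (A B : Mat) (h1 : A.det ≠ 0)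
    (h2 : ((A.adjugate * B) 0 0 + (A.adjugate * B) 1 1) ^ 2 -
      4 * ((A.adjugate * B) 0 0 * (A.adjugate * B) 1 1 -
        (A.adjugate * B) 0 1 * (A.adjugate * B) 1 0) ≠ 0)
    (h3 : (A.adjugate * B) 0 1 ≠ 0) (h4 : (A.adjugate * B) 1 0 ≠ 0) :
    (A, B) ∈ GoodPairs := by
  have hM : A⁻¹ * B = A.det⁻¹ • (A.adjugate * B) := by
    rw [Matrix.inv_def, Ring.inverse_eq_inv, Matrix.smul_mul]
  have hc : A.det⁻¹ ≠ 0 := inv_ne_zero h1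
  refine ⟨h1, ?_, ?_, ?_⟩
  · rw [hM, Matrix.trace_smul, Matrix.det_smul, Matrix.trace_fin_two, Matrix.det_fin_two (A.adjugate * B)]
    simp only [smul_eq_mul, Fintype.card_fin]
    have : (A.det⁻¹ * ((A.adjugate * B) 0 0 + (A.adjugate * B) 1 1)) ^ 2 -
        4 * (A.det⁻¹ ^ 2 * ((A.adjugate * B) 0 0 * (A.adjugate * B) 1 1 -
          (A.adjugate * B) 0 1 * (A.adjugate * B) 1 0)) =
        (A.det⁻¹) ^ 2 * (((A.adjugate * B) 0 0 + (A.adjugate * B) 1 1) ^ 2 -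
          4 * ((A.adjugate * B) 0 0 * (A.adjugate * B) 1 1 -
            (A.adjugate * B) 0 1 * (A.adjugate * B) 1 0)) := by ring
    rw [this]
    exact mul_ne_zero (pow_ne_zero _ hc) h2
  · rw [hM]; simpa using mul_ne_zero hc h3
  · rw [hM]; simpa using mul_ne_zero hc h4

private lemma goodPairs_isOpen : IsOpen GoodPairs := by
  have hdetc : Continuous fun AB : Mat × Mat => AB.1.det := continuous_fst.matrix_det
  have hS1 : IsOpen {AB : Mat × Mat | AB.1.det ≠ 0} :=
    hdetc.isOpen_preimage {(0 : ℂ)}ᶜ isOpen_compl_singleton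
  have hMc : ContinuousOn (fun AB : Mat × Mat => AB.1⁻¹ * AB.2) {AB : Mat × Mat | AB.1.det ≠ 0} := by
    rw [continuousOn_iff_continuous_restrict]
    set S1 := {AB : Mat × Mat | AB.1.det ≠ 0}
    have h1 : Continuous fun x : S1 => (x : Mat × Mat).1 := continuous_fst.comp continuous_subtype_val
    have h2 : Continuous fun x : S1 => (x : Mat × Mat).2 := continuous_snd.comp continuous_subtype_val
    have hinv : Continuous fun x : S1 => ((x : Mat × Mat).1.det)⁻¹ :=
      h1.matrix_det.inv₀ fun x => x.2
    have hi : Continuous fun x : S1 => (x : Mat × Mat).1⁻¹ := by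
      simp only [Matrix.inv_def, Ring.inverse_eq_inv']
      exact hinv.smul h1.matrix_adjugate
    exact hi.matrix_mul h2
  have houter : Continuous fun M : Mat =>
      ((Matrix.trace M) ^ 2 - 4 * M.det) * (M 0 1) * (M 1 0) := by
    have he1 : Continuous fun M : Mat => M 0 1 := (continuous_apply 1).comp (continuous_apply 0)
    have he2 : Continuous fun M : Mat => M 1 0 := (continuous_apply 0).comp (continuous_apply 1)
    exact ((((continuous_id.matrix_trace).pow 2).sub
      (continuous_const.mul continuous_id.matrix_det)).mul he1).mul he2
  have key : GoodPairs = {AB : Mat × Mat | AB.1.det ≠ 0} ∩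
      (fun AB : Mat × Mat => ((Matrix.trace (AB.1⁻¹ * AB.2)) ^ 2 - 4 * (AB.1⁻¹ * AB.2).det) *
        ((AB.1⁻¹ * AB.2) 0 1) * ((AB.1⁻¹ * AB.2) 1 0)) ⁻¹' {(0 : ℂ)}ᶜ := by
    ext AB
    simp only [GoodPairs, Set.mem_setOf_eq, Set.mem_inter_iff, Set.mem_preimage,
      Set.mem_compl_iff, Set.mem_singleton_iff, ← Ne.eq_def, mul_ne_zero_iff, and_assoc]
  rw [key]
  exact (houter.comp_continuousOn hMc).isOpen_inter_preimage hS1 isOpen_compl_singleton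

private lemma goodPairs_dense : Dense GoodPairs := by
  intro x
  rw [mem_closure_iff]
  intro o ho hxo
  obtain ⟨A, B⟩ := x
  set A0 : Mat := 1 with hA0
  set B0 : Mat := ![![0, 1], ![1, 0]] with hB0
  set f1 : ℂ → Mat := fun t => (1 - t) • A + t • A0 with hf1
  set f2 : ℂ → Mat := fun t => (1 - t) • B + t • B0 with hf2
  have hcont : Continuous fun t : ℂ => (f1 t, f2 t) := by
    refine Continuous.prodMk ?_ ?_ <;>
      exact ((continuous_const.sub continuous_id).smul continuous_const).add
        (continuous_id.smul continuous_const)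
  have hγ0 : (f1 0, f2 0) = (A, B) := by simp [hf1, hf2]
  set Ap : Matrix (Fin 2) (Fin 2) ℂ[X] :=
    Matrix.of fun i j => C (A i j) * (1 - X) + C (A0 i j) * X with hAp
  set Bp : Matrix (Fin 2) (Fin 2) ℂ[X] :=
    Matrix.of fun i j => C (B i j) * (1 - X) + C (B0 i j) * X with hBp
  set Np : Matrix (Fin 2) (Fin 2) ℂ[X] := Ap.adjugate * Bp with hNp
  set p : ℂ[X] := Ap.det * ((Np 0 0 + Np 1 1) ^ 2 -
    4 * (Np 0 0 * Np 1 1 - Np 0 1 * Np 1 0)) * (Np 0 1 * Np 1 0) with hp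
  have hmapA : ∀ t : ℂ, (evalRingHom t).mapMatrix Ap = f1 t := by
    intro t; ext i j
    simp [hAp, hf1, Matrix.add_apply, Matrix.smul_apply]
    ring
  have hmapB : ∀ t : ℂ, (evalRingHom t).mapMatrix Bp = f2 t := by
    intro t; ext i j
    simp [hBp, hf2, Matrix.add_apply, Matrix.smul_apply]
    ring
  have hmapN : ∀ t : ℂ, (evalRingHom t).mapMatrix Np = (f1 t).adjugate * f2 t := by
    intro t
    rw [hNp, _root_.map_mul, RingHom.map_adjugate, hmapA, hmapB]
  have hNe : ∀ (t : ℂ) (j k : Fin 2), eval t (Np j k) = ((f1 t).adjugate * f2 t) j k := by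
    intro t j k
    rw [← hmapN t]
    simp [RingHom.mapMatrix_apply]
  have hdet : ∀ t : ℂ, eval t Ap.det = (f1 t).det := by
    intro t
    rw [← hmapA t, ← RingHom.map_det]
    simp
  have heval : ∀ t : ℂ, eval t p = (f1 t).det *
      ((((f1 t).adjugate * f2 t) 0 0 + ((f1 t).adjugate * f2 t) 1 1) ^ 2 -
        4 * (((f1 t).adjugate * f2 t) 0 0 * ((f1 t).adjugate * f2 t) 1 1 -
          ((f1 t).adjugate * f2 t) 0 1 * ((f1 t).adjugate * f2 t) 1 0)) *
      (((f1 t).adjugate * f2 t) 0 1 * ((f1 t).adjugate * f2 t) 1 0) := by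
    intro t
    simp only [hp, eval_mul, eval_sub, eval_add, eval_pow, eval_ofNat, hdet, hNe]
  have hf11 : f1 1 = A0 := by simp [hf1]
  have hf21 : f2 1 = B0 := by simp [hf2]
  have hN1 : (f1 1).adjugate * f2 1 = B0 := by
    rw [hf11, hf21, hA0, Matrix.adjugate_one, Matrix.one_mul]
  have heval1 : eval 1 p = 4 := by
    rw [heval 1, hN1, hf11, hA0]
    norm_num [hB0, Matrix.det_one]
  have hpne : p ≠ 0 := by
    intro h
    rw [h] at heval1
    simp at heval1
  have h0mem : (0 : ℂ) ∈ (fun t : ℂ => (f1 t, f2 t)) ⁻¹' o := by simp [hγ0, hxo]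
  obtain ⟨δ, hδ, hball⟩ := Metric.isOpen_iff.mp (ho.preimage hcont) 0 h0mem
  obtain ⟨t, htδ, htroot⟩ : ∃ t : ℂ, dist t 0 < δ ∧ ¬ p.IsRoot t := by
    have hinf : (((↑) : ℝ → ℂ) '' Set.Ioo 0 δ).Infinite :=
      (Set.Ioo_infinite hδ).image (Complex.ofReal_injective.injOn)
    obtain ⟨t, ht⟩ := (hinf.diff (p.finite_setOf_isRoot hpne)).nonempty
    obtain ⟨⟨r, hr, rfl⟩, htR⟩ := ht
    refine ⟨r, ?_, htR⟩
    rw [Complex.dist_eq, sub_zero]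
    simpa [Complex.norm_real, Real.norm_eq_abs, abs_of_pos hr.1] using hr.2
  have htne : eval t p ≠ 0 := htroot
  rw [heval t] at htne
  have h1 := (mul_ne_zero_iff.mp htne).1
  have h4' := (mul_ne_zero_iff.mp htne).2
  have h1a := (mul_ne_zero_iff.mp h1).1
  have h2a := (mul_ne_zero_iff.mp h1).2
  have h3a := (mul_ne_zero_iff.mp h4').1
  have h4a := (mul_ne_zero_iff.mp h4').2
  refine ⟨(f1 t, f2 t), hball ?_, mem_goodPairs _ _ h1a h2a h3a h4a⟩
  simpa [Metric.mem_ball] using htδ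

private lemma goodPairs_form (A B : Matrix (Fin 2) (Fin 2) ℂ) (h1 : A.det ≠ 0)
    (h2 : (Matrix.trace (A⁻¹ * B)) ^ 2 - 4 * (A⁻¹ * B).det ≠ 0)
    (hb : (A⁻¹ * B) 0 1 ≠ 0) (hc : (A⁻¹ * B) 1 0 ≠ 0) :
    ∃ (bU bV bW : Module.Basis (Fin 2) ℂ (Fin 2 → ℂ)),
      ∀ i, PhiOf A B (bU i) = bV i ⊗ₜ[ℂ] bW i := by
  set M := A⁻¹ * B with hMdef
  have hdisc : (M 0 0 + M 1 1) ^ 2 - 4 * (M 0 0 * M 1 1 - M 0 1 * M 1 0) ≠ 0 := by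
    rwa [Matrix.trace_fin_two, Matrix.det_fin_two] at h2
  obtain ⟨s, hs⟩ : ∃ s : ℂ, s ^ 2 = (M 0 0 + M 1 1) ^ 2 - 4 * (M 0 0 * M 1 1 - M 0 1 * M 1 0) :=
    IsAlgClosed.exists_pow_nat_eq _ (by norm_num)
  have hs0 : s ≠ 0 := by
    intro h; rw [h] at hs; simp at hs; exact hdisc hs.symm
  set l : Fin 2 → ℂ := ![(M 0 0 + M 1 1 - s) / 2, (M 0 0 + M 1 1 + s) / 2] with hldef
  have hroot : ∀ i, (l i) ^ 2 - (M 0 0 + M 1 1) * l i + (M 0 0 * M 1 1 - M 0 1 * M 1 0) = 0 := by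
    intro i; fin_cases i <;>
      simp only [hldef, Fin.mk_zero, Fin.mk_one, Matrix.cons_val_zero, Matrix.cons_val_one,
        Matrix.head_cons] <;>
      linear_combination hs / 4
  have hdiff : l 1 - l 0 = s := by
    simp only [hldef, Matrix.cons_val_zero, Matrix.cons_val_one, Matrix.head_cons]; ring
  have hal : ∀ i, M 0 0 - l i ≠ 0 := by
    intro i h
    have h' : M 0 1 * M 1 0 = 0 := by linear_combination (-1) * hroot i + (M 1 1 - l i) * h
    rcases mul_eq_zero.mp h' with h'' | h''
    · exact hb h''
    · exact hc h''
  set Q : Matrix (Fin 2) (Fin 2) ℂ := ![![M 0 0 - l 0, M 0 0 - l 1], ![M 1 0, M 1 0]] with hQdef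
  set PU : Matrix (Fin 2) (Fin 2) ℂ :=
    ![![-l 0 * (M 0 0 - l 0), -l 1 * (M 0 0 - l 1)], ![M 0 0 - l 0, M 0 0 - l 1]] with hPUdef
  set PW : Matrix (Fin 2) (Fin 2) ℂ := ![![M 0 0 - l 0, M 0 0 - l 1], ![M 0 1, M 0 1]] with hPWdef
  have hQ : Q.det ≠ 0 := by
    have : Q.det = M 1 0 * s := by
      rw [Matrix.det_fin_two]
      simp only [hQdef, Matrix.cons_val_zero, Matrix.cons_val_one, Matrix.head_cons]
      linear_combination M 1 0 * hdiff
    rw [this]; exact mul_ne_zero hc hs0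
  have hPU : PU.det ≠ 0 := by
    have : PU.det = (M 0 0 - l 0) * ((M 0 0 - l 1) * s) := by
      rw [Matrix.det_fin_two]
      simp only [hPUdef, Matrix.cons_val_zero, Matrix.cons_val_one, Matrix.head_cons]
      linear_combination ((M 0 0 - l 0) * (M 0 0 - l 1)) * hdiff
    rw [this]; exact mul_ne_zero (hal 0) (mul_ne_zero (hal 1) hs0)
  have hPW : PW.det ≠ 0 := by
    have : PW.det = M 0 1 * s := by
      rw [Matrix.det_fin_two]
      simp only [hPWdef, Matrix.cons_val_zero, Matrix.cons_val_one, Matrix.head_cons]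
      linear_combination M 0 1 * hdiff
    rw [this]; exact mul_ne_zero hb hs0
  have hPV : (A * Q).det ≠ 0 := by
    rw [Matrix.det_mul]; exact mul_ne_zero h1 hQ
  obtain ⟨bU, hbU⟩ := exists_basis_cols PU hPU
  obtain ⟨bV, hbV⟩ := exists_basis_cols (A * Q) hPV
  obtain ⟨bW, hbW⟩ := exists_basis_cols PW hPW
  refine ⟨bU, bV, bW, fun i => ?_⟩
  have hB : B = A * M := (Matrix.mul_nonsing_inv_cancel_left A B (isUnit_iff_ne_zero.mpr h1)).symm
  rw [hbU i, hbV i, hbW i, phiOf_apply, tmul_expand]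
  refine Finset.sum_congr rfl fun j _ => Finset.sum_congr rfl fun k _ => ?_
  congr 1
  have hBjk : ∀ k', B j k' = A j 0 * M 0 k' + A j 1 * M 1 k' := by
    intro k'; rw [hB, Matrix.mul_apply, Fin.sum_univ_two]
  have hAQ : (A * Q) j i = A j 0 * Q 0 i + A j 1 * Q 1 i := by
    rw [Matrix.mul_apply, Fin.sum_univ_two]
  rw [hBjk, hAQ]
  fin_cases i <;> fin_cases k <;>
    simp only [hQdef, hPUdef, hPWdef, Fin.mk_zero, Fin.mk_one, Matrix.cons_val_zero,
      Matrix.cons_val_one, Matrix.head_cons, Fin.isValue]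
  · ring
  · linear_combination A j 1 * hroot 0
  · ring
  · linear_combination A j 1 * hroot 1

end Aux

/-- A generic linear map `ℂ² → ℂ² ⊗ ℂ²` is, after suitable (invertible) changes of bases,
the copy map `|i⟩ ↦ |i⟩ ⊗ |i⟩`: the set `GoodPairs` is open and dense in `M₂(ℂ) × M₂(ℂ)`,
and every pair in it gives such a map. -/
theorem stmt_5 :
    IsOpen GoodPairs ∧ Dense GoodPairs ∧
      ∀ AB ∈ GoodPairs,
        ∃ (bU bV bW : Module.Basis (Fin 2) ℂ (Fin 2 → ℂ)),
          ∀ i, PhiOf AB.1 AB.2 (bU i) = bV i ⊗ₜ[ℂ] bW i := by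
  refine ⟨goodPairs_isOpen, goodPairs_dense, ?_⟩
  rintro ⟨A, B⟩ ⟨h1, h2, hb, hc⟩
  exact goodPairs_form A B h1 h2 hb hc
end

section
/- Let (A,B) ∈ M₂(ℂ)² satisfy: det(A) ≠ 0, the matrix A⁻¹B has two distinct eigenvalues λ₁ ≠ λ₂, and both off-diagonal entries of A⁻¹B are nonzero. Then for i = 1,2 the matrices D_i = λ_i I − A⁻¹B are nonzero of rank 1, and there exist bases {u₁,u₂} and {v₁,v₂} of ℂ² (column and row vectors) with D_i = u_i · v_i, such that {A u₁, A u₂} and {v₁, v₂} are each bases of ℂ². -/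
lemma li_of_det_ne_zero (w : Fin 2 → Fin 2 → ℂ)
    (h : w 0 0 * w 1 1 - w 0 1 * w 1 0 ≠ 0) : LinearIndependent ℂ w := by
  have hdet : (Matrix.of w).det ≠ 0 := by rw [Matrix.det_fin_two]; exact h
  have := Matrix.linearIndependent_rows_iff_isUnit (K := ℂ) (A := Matrix.of w)
  exact this.2 ((Matrix.isUnit_iff_isUnit_det _).2 (isUnit_iff_ne_zero.2 hdet))

/-- Key lemma for GHZ-equivalence of generic 2×2×2 tensors: if `det A ≠ 0`, `A⁻¹B` has two
distinct eigenvalues `l 0 ≠ l 1` and both off-diagonal entries of `A⁻¹B` are nonzero, then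
`D i = l i • 1 − A⁻¹B` are nonzero rank-1 matrices, `D i = uᵢ ⬝ vᵢ` with `{u₁,u₂}`, `{v₁,v₂}`
and `{Au₁, Au₂}` each bases (linearly independent 2-element families) of `ℂ²`. -/
theorem stmt_6 (A B : Matrix (Fin 2) (Fin 2) ℂ) (hA : A.det ≠ 0)
    (l : Fin 2 → ℂ) (hl : l 0 ≠ l 1)
    (heig : ∀ i, ((l i) • (1 : Matrix (Fin 2) (Fin 2) ℂ) - A⁻¹ * B).det = 0)
    (h01 : (A⁻¹ * B) 0 1 ≠ 0) (h10 : (A⁻¹ * B) 1 0 ≠ 0) :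
    (∀ i, ((l i) • (1 : Matrix (Fin 2) (Fin 2) ℂ) - A⁻¹ * B) ≠ 0 ∧
      ((l i) • (1 : Matrix (Fin 2) (Fin 2) ℂ) - A⁻¹ * B).rank = 1) ∧
    ∃ u v : Fin 2 → (Fin 2 → ℂ),
      (∀ i, (l i) • (1 : Matrix (Fin 2) (Fin 2) ℂ) - A⁻¹ * B
          = Matrix.vecMulVec (u i) (v i)) ∧
      LinearIndependent ℂ u ∧ LinearIndependent ℂ v ∧
      LinearIndependent ℂ (fun i => A.mulVec (u i)) := by
  set M := A⁻¹ * B with hM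
  -- determinant identity
  have hdet : ∀ i, (l i - M 0 0) * (l i - M 1 1) = M 0 1 * M 1 0 := by
    intro i
    have := heig i
    rw [Matrix.det_fin_two] at this
    simp only [Matrix.sub_apply, Matrix.smul_apply, Matrix.one_apply, smul_eq_mul] at this
    norm_num at this
    linear_combination this
  set u : Fin 2 → Fin 2 → ℂ := fun i => ![1, (M 1 1 - l i) / M 0 1] with hu
  set v : Fin 2 → Fin 2 → ℂ := fun i => ![l i - M 0 0, -(M 0 1)] with hv
  have hfact : ∀ i, (l i) • (1 : Matrix (Fin 2) (Fin 2) ℂ) - M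
      = Matrix.vecMulVec (u i) (v i) := by
    intro i
    ext a b
    fin_cases a <;> fin_cases b <;>
      simp [Matrix.vecMulVec_apply, Matrix.one_apply, hu, hv] <;>
      field_simp <;> first | linear_combination hdet i | linear_combination
  constructor
  · intro i
    have hne : (l i) • (1 : Matrix (Fin 2) (Fin 2) ℂ) - M ≠ 0 := by
      intro h
      have := congrFun (congrFun h 0) 1
      simp [Matrix.one_apply] at this
      exact h01 this
    refine ⟨hne, le_antisymm ?_ ?_⟩
    · rw [hfact i, Matrix.vecMulVec_eq (Fin 1)]
      calc ((Matrix.replicateCol (Fin 1) (u i)) * (Matrix.replicateRow (Fin 1) (v i))).rank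
          ≤ (Matrix.replicateCol (Fin 1) (u i)).rank := Matrix.rank_mul_le_left _ _
        _ ≤ Fintype.card (Fin 1) := Matrix.rank_le_card_width _
        _ = 1 := by simp
    · by_contra hr
      push_neg at hr
      have h : ((l i) • (1 : Matrix (Fin 2) (Fin 2) ℂ) - M).rank = 0 :=
        Nat.lt_one_iff.1 hr
      rw [Matrix.rank] at h
      have hbot := Submodule.finrank_eq_zero (R := ℂ).1 h
      have hx : ((l i) • (1 : Matrix (Fin 2) (Fin 2) ℂ) - M).mulVecLin
          (Pi.single 1 1) = 0 := by
        have : ((l i) • (1 : Matrix (Fin 2) (Fin 2) ℂ) - M).mulVecLin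
            (Pi.single 1 1) ∈ (⊥ : Submodule ℂ (Fin 2 → ℂ)) := by
          rw [← hbot]; exact LinearMap.mem_range_self _ _
        simpa using this
      have := congrFun hx 0
      simp [Matrix.mulVecLin_apply, Matrix.mulVec, dotProduct,
        Fin.sum_univ_two, Matrix.one_apply, Pi.single_apply] at this
      try exact h01 this
  · refine ⟨u, v, hfact, ?_, ?_, ?_⟩
    · apply li_of_det_ne_zero
      have : u 0 0 * u 1 1 - u 0 1 * u 1 0
          = (l 0 - l 1) / M 0 1 := by
        simp [hu]
        try field_simp
        try ring
      rw [this]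
      exact div_ne_zero (sub_ne_zero.2 hl) h01
    · apply li_of_det_ne_zero
      have : v 0 0 * v 1 1 - v 0 1 * v 1 0 = -(M 0 1) * (l 0 - l 1) := by
        simp [hv]; try ring
      rw [this]
      exact mul_ne_zero (neg_ne_zero.2 h01) (sub_ne_zero.2 hl)
    · have key : Matrix.of (fun i => A.mulVec (u i)) = (Matrix.of u) * A.transpose := by
        ext i j
        simp [Matrix.mul_apply, Matrix.mulVec, dotProduct, Fin.sum_univ_two,
          mul_comm]
        fin_cases j <;> simp
      have hdet2 : (Matrix.of (fun i => A.mulVec (u i))).det ≠ 0 := by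
        rw [key, Matrix.det_mul, Matrix.det_transpose]
        refine mul_ne_zero ?_ hA
        rw [Matrix.det_fin_two]
        have : (Matrix.of u) 0 0 * (Matrix.of u) 1 1 - (Matrix.of u) 0 1 * (Matrix.of u) 1 0
            = (l 0 - l 1) / M 0 1 := by
          simp [hu]
          try field_simp
          try ring
        rw [this]
        exact div_ne_zero (sub_ne_zero.2 hl) h01
      apply li_of_det_ne_zero
      rw [Matrix.det_fin_two] at hdet2
      exact hdet2
end

section
/- Consider three qudits of dimensions 3, 2, 3 with two projectors: Π₁ = |φ⟩⟨φ| of rank 1 acting on qudits 1 and 2, and Π₂ of rank 5 acting on qudits 2 and 3. Suppose Π₂ has a one-dimensional kernel spanned by |ψ⟩ ∈ ℂ²⊗ℂ³. Write |φ⟩ = Σ_{i=1}^{2} λ_i |α_i⟩⊗|β_i⟩ via Schmidt decomposition, and let |α₃⟩ ∈ ℂ³ complete {|α₁⟩,|α₂⟩} to an orthonormal basis (when λ₁λ₂ ≠ 0). Then the state |Ω⟩ = |α₃⟩ ⊗ |ψ⟩ is a nonzero state annihilated by both Π₁ ⊗ I and I ⊗ Π₂, so the satisfying subspace of H = Π₁⊗I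 + I⊗Π₂ is nontrivial. -/
/-- Three qudits of dimensions 3, 2, 3 with a rank-1 projector `Π₁ = |φ⟩⟨φ|` on qudits 1,2
and a projector `Π₂` on qudits 2,3 whose kernel contains a nonzero `ψ`: if
`φ = Σᵢ λᵢ αᵢ ⊗ βᵢ` is a Schmidt decomposition and `α₃` completes `{α₁, α₂}` to an
orthonormal basis of `ℂ³`, then `Ω = α₃ ⊗ ψ` is a nonzero simultaneous zero state of
`Π₁ ⊗ I` and `I ⊗ Π₂`, so the satisfying subspace is nontrivial. -/
theorem stmt_14
    (Pi1 : Matrix (Fin 3 × Fin 2) (Fin 3 × Fin 2) ℂ)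
    (Pi2 : Matrix (Fin 2 × Fin 3) (Fin 2 × Fin 3) ℂ)
    (φ : Fin 3 × Fin 2 → ℂ)
    (hPi1 : ∀ p q, Pi1 p q = φ p * (starRingEnd ℂ) (φ q))
    (lam : Fin 2 → ℝ) (hlam : ∀ i, 0 < lam i)
    (α : Fin 2 → EuclideanSpace ℂ (Fin 3)) (β : Fin 2 → EuclideanSpace ℂ (Fin 2))
    (hα : Orthonormal ℂ α) (hβ : Orthonormal ℂ β)
    (hφ : ∀ a b, φ (a, b) = ∑ i, (lam i : ℂ) * α i a * β i b)
    (α₃ : EuclideanSpace ℂ (Fin 3)) (hα₃n : ‖α₃‖ = 1)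
    (hα₃o : ∀ i, (inner ℂ (α i) α₃ : ℂ) = 0)
    (ψ : Fin 2 × Fin 3 → ℂ) (hψ : ψ ≠ 0) (hker : Pi2.mulVec ψ = 0) :
    (fun p : Fin 3 × Fin 2 × Fin 3 => α₃ p.1 * ψ p.2) ≠ 0 ∧
    (∀ p : Fin 3 × Fin 2 × Fin 3,
      (∑ q : Fin 3 × Fin 2, Pi1 (p.1, p.2.1) q * (α₃ q.1 * ψ (q.2, p.2.2))) = 0) ∧
    (∀ p : Fin 3 × Fin 2 × Fin 3,
      (∑ q : Fin 2 × Fin 3, Pi2 (p.2.1, p.2.2) q * (α₃ p.1 * ψ q)) = 0) := by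
  have key : ∀ b : Fin 2, (∑ a : Fin 3, (starRingEnd ℂ) (φ (a, b)) * α₃ a) = 0 := by
    intro b
    have h1 : ∀ a : Fin 3, (starRingEnd ℂ) (φ (a, b)) * α₃ a
        = ∑ i : Fin 2, (lam i : ℂ) * (starRingEnd ℂ) (β i b) *
            ((starRingEnd ℂ) (α i a) * α₃ a) := by
      intro a
      rw [hφ, map_sum, Finset.sum_mul]
      refine Finset.sum_congr rfl fun i _ => ?_
      simp [map_mul, Complex.conj_ofReal]
      ring
    simp only [h1]
    rw [Finset.sum_comm]
    refine Finset.sum_eq_zero fun i _ => ?_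
    rw [← Finset.mul_sum]
    have : (∑ a : Fin 3, (starRingEnd ℂ) (α i a) * α₃ a) = 0 := by
      have := hα₃o i
      simpa [EuclideanSpace.inner_eq_star_dotProduct, dotProduct, mul_comm] using this
    rw [this, mul_zero]
  refine ⟨?_, ?_, ?_⟩
  · have hα₃ : α₃ ≠ 0 := fun h => by simp [h] at hα₃n
    obtain ⟨a, ha⟩ : ∃ a, α₃ a ≠ 0 := by
      by_contra! h0; exact hα₃ (by ext a; simp [h0])
    obtain ⟨r, hr⟩ := Function.ne_iff.mp hψ
    intro h
    have := congrFun h (a, r)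
    simp only [Pi.zero_apply, mul_eq_zero] at this
    rcases this with h1 | h2
    · exact ha h1
    · exact hr h2
  · intro p
    have : (∑ q : Fin 3 × Fin 2, Pi1 (p.1, p.2.1) q * (α₃ q.1 * ψ (q.2, p.2.2)))
        = φ (p.1, p.2.1) * ∑ b : Fin 2, ψ (b, p.2.2) *
            (∑ a : Fin 3, (starRingEnd ℂ) (φ (a, b)) * α₃ a) := by
      rw [Fintype.sum_prod_type]
      rw [Finset.mul_sum]
      rw [Finset.sum_comm]
      refine Finset.sum_congr rfl fun b _ => ?_
      rw [Finset.mul_sum, Finset.mul_sum]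
      refine Finset.sum_congr rfl fun a _ => ?_
      rw [hPi1]
      ring
    rw [this]
    simp only [key, mul_zero, Finset.sum_const_zero]
  · intro p
    have : (∑ q : Fin 2 × Fin 3, Pi2 (p.2.1, p.2.2) q * (α₃ p.1 * ψ q))
        = α₃ p.1 * Pi2.mulVec ψ (p.2.1, p.2.2) := by
      rw [Matrix.mulVec, dotProduct, Finset.mul_sum]
      refine Finset.sum_congr rfl fun q _ => ?_
      ring
    rw [this, hker]
    simp
end

section
/- Let d₁ = d₃ = 3, d₂ = 2. For all linear maps T₁ : ℂ^5 → ℂ³ ⊗ ℂ² and T₂ : ℂ² ⊗ ℂ³ → ℂ^5, the rank of the map (Id_{ℂ³} ⊗ T₂) ∘ (T₁ ⊗ Id_{ℂ³}) : ℂ^5 ⊗ ℂ³ → ℂ³ ⊗ ℂ^5 is at most 14, and there exist T₁, T₂ achieving rank exactly 14. (In particular, the quantum max-flow of this network is 14, strictly less than the quantum min-cut 15.) -/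
open scoped TensorProduct

noncomputable section

/-- The contracted map `(Id_{ℂ³} ⊗ T₂) ∘ (T₁ ⊗ Id_{ℂ³}) : ℂ⁵ ⊗ ℂ³ → ℂ³ ⊗ ℂ⁵` of the network
with input capacities 5, 3, internal edge of capacity 2, and output capacities 3, 5. -/
def network16 (T₁ : (Fin 5 → ℂ) →ₗ[ℂ] (Fin 3 → ℂ) ⊗[ℂ] (Fin 2 → ℂ))
    (T₂ : (Fin 2 → ℂ) ⊗[ℂ] (Fin 3 → ℂ) →ₗ[ℂ] (Fin 5 → ℂ)) :
    (Fin 5 → ℂ) ⊗[ℂ] (Fin 3 → ℂ) →ₗ[ℂ] (Fin 3 → ℂ) ⊗[ℂ] (Fin 5 → ℂ) :=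
  TensorProduct.map LinearMap.id T₂ ∘ₗ
    (TensorProduct.assoc ℂ (Fin 3 → ℂ) (Fin 2 → ℂ) (Fin 3 → ℂ)).toLinearMap ∘ₗ
    TensorProduct.map T₁ LinearMap.id

/-- coordinate functional map on a tensor product of pi types -/
def tcoords (n m : ℕ) : (Fin n → ℂ) ⊗[ℂ] (Fin m → ℂ) →ₗ[ℂ] (Fin n × Fin m → ℂ) :=
  TensorProduct.lift (LinearMap.mk₂ ℂ (fun v w p => v p.1 * w p.2)
    (by intros; funext p; simp [add_mul])
    (by intros; funext p; simp [mul_assoc])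
    (by intros; funext p; simp [mul_add])
    (by intros; funext p; simp [mul_comm, mul_left_comm]))

@[simp] lemma tcoords_tmul (n m : ℕ) (v : Fin n → ℂ) (w : Fin m → ℂ) :
    tcoords n m (v ⊗ₜ w) = fun p => v p.1 * w p.2 := rfl

/-- contraction against the `j`-th dual basis vector in the second slot. -/
def ctr (j : Fin 2) : (Fin 3 → ℂ) ⊗[ℂ] (Fin 2 → ℂ) →ₗ[ℂ] (Fin 3 → ℂ) :=
  TensorProduct.lift (LinearMap.mk₂ ℂ (fun x u => u j • x)
    (by intros; simp [smul_add])
    (by intros; rw [smul_comm])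
    (by intros; simp [add_smul])
    (by intros; simp [smul_smul, mul_comm]))

@[simp] lemma ctr_tmul (j : Fin 2) (x : Fin 3 → ℂ) (u : Fin 2 → ℂ) :
    ctr j (x ⊗ₜ u) = u j • x := rfl

set_option maxHeartbeats 1000000 in
set_option synthInstance.maxHeartbeats 1000000 in
lemma network16_tmul (T₁ : (Fin 5 → ℂ) →ₗ[ℂ] (Fin 3 → ℂ) ⊗[ℂ] (Fin 2 → ℂ))
    (T₂ : (Fin 2 → ℂ) ⊗[ℂ] (Fin 3 → ℂ) →ₗ[ℂ] (Fin 5 → ℂ)) (v : Fin 5 → ℂ) (w : Fin 3 → ℂ) :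
    network16 T₁ T₂ (v ⊗ₜ w) =
      ctr 0 (T₁ v) ⊗ₜ T₂ (Pi.single 0 1 ⊗ₜ w) + ctr 1 (T₁ v) ⊗ₜ T₂ (Pi.single 1 1 ⊗ₜ w) := by
  simp only [network16, LinearMap.comp_apply, TensorProduct.map_tmul, LinearMap.id_coe, id_eq]
  generalize T₁ v = z
  induction z using TensorProduct.induction_on with
  | zero => simp only [TensorProduct.zero_tmul, map_zero, add_zero, TensorProduct.zero_tmul]
  | tmul x u =>
      simp only [TensorProduct.assoc_tmul, LinearEquiv.coe_coe, TensorProduct.map_tmul,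
        LinearMap.id_coe, id_eq, ctr_tmul]
      rw [TensorProduct.smul_tmul, TensorProduct.smul_tmul, ← TensorProduct.tmul_add,
        ← map_smul, ← map_smul, TensorProduct.smul_tmul', TensorProduct.smul_tmul',
        ← map_add, ← TensorProduct.add_tmul]
      have hu : u = u 0 • (Pi.single 0 1 : Fin 2 → ℂ) + u 1 • (Pi.single 1 1 : Fin 2 → ℂ) := by
        funext i; fin_cases i <;> simp [Pi.single_apply]
      rw [← hu]
  | add z₁ z₂ h₁ h₂ => simp only [map_add, TensorProduct.add_tmul, h₁, h₂]; abel

/-- pairing a dual functional in the first slot -/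
def lpair (f : (Fin 5 → ℂ) →ₗ[ℂ] ℂ) :
    (Fin 5 → ℂ) ⊗[ℂ] (Fin 3 → ℂ) →ₗ[ℂ] (Fin 3 → ℂ) :=
  TensorProduct.lift (LinearMap.mk₂ ℂ (fun v w => f v • w)
    (by intros; simp [add_smul])
    (by intros; simp [smul_smul])
    (by intros; simp [smul_add])
    (by intros; rw [smul_comm]))

@[simp] lemma lpair_tmul (f : (Fin 5 → ℂ) →ₗ[ℂ] ℂ) (v : Fin 5 → ℂ) (w : Fin 3 → ℂ) :
    lpair f (v ⊗ₜ w) = f v • w := rfl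

lemma exists_ne_zero_ker {V W : Type*} [AddCommGroup V] [Module ℂ V] [AddCommGroup W]
    [Module ℂ W] [FiniteDimensional ℂ V] [Module.Finite ℂ W] (f : V →ₗ[ℂ] W)
    (h : Module.finrank ℂ W < Module.finrank ℂ V) : ∃ v, v ≠ 0 ∧ f v = 0 := by
  by_contra hc
  push_neg at hc
  have hinj : Function.Injective f := by
    rw [← LinearMap.ker_eq_bot, Submodule.eq_bot_iff]
    intro x hx
    by_contra hx0
    exact hc x hx0 hx
  exact absurd (LinearMap.finrank_le_finrank_of_injective hinj) (by omega)

lemma network16_exists_ker (T₁ : (Fin 5 → ℂ) →ₗ[ℂ] (Fin 3 → ℂ) ⊗[ℂ] (Fin 2 → ℂ))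
    (T₂ : (Fin 2 → ℂ) ⊗[ℂ] (Fin 3 → ℂ) →ₗ[ℂ] (Fin 5 → ℂ)) :
    ∃ x, x ≠ 0 ∧ network16 T₁ T₂ x = 0 := by
  set A : Fin 2 → ((Fin 5 → ℂ) →ₗ[ℂ] (Fin 3 → ℂ)) := fun j => (ctr j) ∘ₗ T₁ with hA
  set B : Fin 2 → ((Fin 3 → ℂ) →ₗ[ℂ] (Fin 5 → ℂ)) := fun j =>
    T₂ ∘ₗ (TensorProduct.mk ℂ (Fin 2 → ℂ) (Fin 3 → ℂ) (Pi.single j 1)) with hB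
  have hnet : ∀ (v : Fin 5 → ℂ) (w : Fin 3 → ℂ),
      network16 T₁ T₂ (v ⊗ₜ w) = A 0 v ⊗ₜ B 0 w + A 1 v ⊗ₜ B 1 w := by
    intro v w
    simpa [hA, hB] using network16_tmul T₁ T₂ v w
  by_cases hcase : ∃ u : Fin 5 → ℂ, u ≠ 0 ∧ A 0 u = 0 ∧ A 1 u = 0
  · obtain ⟨u, hu0, h0, h1⟩ := hcase
    refine ⟨u ⊗ₜ Pi.single 0 1, ?_, ?_⟩
    · intro h
      have hi : ∃ i, u i ≠ 0 := by
        by_contra hc; push_neg at hc; exact hu0 (funext hc)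
      obtain ⟨i, hi⟩ := hi
      have := congrArg (fun y => tcoords 5 3 y (i, 0)) h
      simp [Pi.single_apply] at this
      exact hi this
    · rw [hnet, h0, h1, TensorProduct.zero_tmul, TensorProduct.zero_tmul, add_zero]
  · push_neg at hcase
    have hkerA : ∀ j, 2 ≤ Module.finrank ℂ ↥(LinearMap.ker (A j)) := by
      intro j
      have h5 := LinearMap.finrank_range_add_finrank_ker (A j)
      have h3 : Module.finrank ℂ ↥(LinearMap.range (A j)) ≤ 3 := by
        have := Submodule.finrank_le (LinearMap.range (A j))
        simpa using this
      simp only [Module.finrank_fin_fun] at h5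
      omega
    obtain ⟨p, hp0, hpker⟩ := exists_ne_zero_ker
      ((A 1 ∘ₗ (Submodule.subtype _) ∘ₗ LinearMap.fst ℂ ↥(LinearMap.ker (A 0)) ↥(LinearMap.ker (A 1))) +
       (A 0 ∘ₗ (Submodule.subtype _) ∘ₗ LinearMap.snd ℂ ↥(LinearMap.ker (A 0)) ↥(LinearMap.ker (A 1))))
      (by
        rw [Module.finrank_prod]
        have h0 := hkerA 0
        have h1 := hkerA 1
        simp only [Module.finrank_fin_fun]
        omega)
    obtain ⟨⟨u₀, hu₀mem⟩, u₁, hu₁mem⟩ := p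
    rw [LinearMap.mem_ker] at hu₀mem hu₁mem
    have h1 : A 1 u₀ + A 0 u₁ = 0 := by simpa using hpker
    have hne : ¬(u₀ = 0 ∧ u₁ = 0) := by
      intro ⟨ha, hb⟩
      exact hp0 (by simp [Prod.ext_iff, ha, hb, Subtype.ext_iff])
    have hA1u₀ : A 1 u₀ ≠ 0 := by
      by_cases hz : u₀ = 0
      · have h01 : A 0 u₁ = 0 := by rw [hz] at h1; simpa using h1
        have hu1 : u₁ ≠ 0 := fun h => hne ⟨hz, h⟩
        exact absurd hu₁mem (hcase u₁ hu1 h01)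
      · exact hcase u₀ hz hu₀mem
    have h2 : A 0 u₁ = -(A 1 u₀) := eq_neg_of_add_eq_zero_right h1
    obtain ⟨q, hq0, hqker⟩ := exists_ne_zero_ker
      ((B 1 ∘ₗ LinearMap.fst ℂ (Fin 3 → ℂ) (Fin 3 → ℂ)) -
       (B 0 ∘ₗ LinearMap.snd ℂ (Fin 3 → ℂ) (Fin 3 → ℂ)))
      (by rw [Module.finrank_prod]; simp only [Module.finrank_fin_fun]; omega)
    obtain ⟨w₀, w₁⟩ := q
    have hBw : B 1 w₀ - B 0 w₁ = 0 := by simpa using hqker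
    refine ⟨u₀ ⊗ₜ w₀ + u₁ ⊗ₜ w₁, ?_, ?_⟩
    · intro hxz
      have hns : u₀ ∉ Submodule.span ℂ {u₁} := by
        intro hmem
        obtain ⟨c, hc⟩ := Submodule.mem_span_singleton.1 hmem
        apply hA1u₀
        rw [← hc, map_smul, hu₁mem, smul_zero]
      have hns' : u₁ ∉ Submodule.span ℂ {u₀} := by
        intro hmem
        obtain ⟨c, hc⟩ := Submodule.mem_span_singleton.1 hmem
        apply hA1u₀
        have : A 0 u₁ = 0 := by rw [← hc, map_smul, hu₀mem, smul_zero]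
        rw [this] at h2
        simpa using h2.symm
      obtain ⟨f, hf0, hfmap⟩ := Submodule.exists_dual_map_eq_bot_of_notMem hns inferInstance
      obtain ⟨g, hg0, hgmap⟩ := Submodule.exists_dual_map_eq_bot_of_notMem hns' inferInstance
      have hf1 : f u₁ = 0 := by
        have : f u₁ ∈ Submodule.map f (Submodule.span ℂ {u₁}) :=
          Submodule.mem_map_of_mem (Submodule.mem_span_singleton_self u₁)
        rw [hfmap] at this
        simpa using this
      have hg1 : g u₀ = 0 := by
        have : g u₀ ∈ Submodule.map g (Submodule.span ℂ {u₀}) :=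
          Submodule.mem_map_of_mem (Submodule.mem_span_singleton_self u₀)
        rw [hgmap] at this
        simpa using this
      have hw₀ : w₀ = 0 := by
        have := congrArg (lpair f) hxz
        simp [hf1] at this
        rcases this with h | h
        · exact absurd h hf0
        · exact h
      have hw₁ : w₁ = 0 := by
        have := congrArg (lpair g) hxz
        simp [hg1] at this
        rcases this with h | h
        · exact absurd h hg0
        · exact h
      exact hq0 (by simp [Prod.ext_iff, hw₀, hw₁])
    · rw [map_add, hnet, hnet, hu₀mem, hu₁mem, TensorProduct.zero_tmul,
        TensorProduct.zero_tmul, zero_add, add_zero, h2, TensorProduct.neg_tmul]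
      rw [← sub_eq_add_neg, ← TensorProduct.tmul_sub, hBw, TensorProduct.tmul_zero]

lemma network16_rank_le (T₁ : (Fin 5 → ℂ) →ₗ[ℂ] (Fin 3 → ℂ) ⊗[ℂ] (Fin 2 → ℂ))
    (T₂ : (Fin 2 → ℂ) ⊗[ℂ] (Fin 3 → ℂ) →ₗ[ℂ] (Fin 5 → ℂ)) :
    Module.finrank ℂ ↥(LinearMap.range (network16 T₁ T₂)) ≤ 14 := by
  obtain ⟨x, hx0, hxker⟩ := network16_exists_ker T₁ T₂
  have hrk := LinearMap.finrank_range_add_finrank_ker (network16 T₁ T₂)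
  have hdom : Module.finrank ℂ ((Fin 5 → ℂ) ⊗[ℂ] (Fin 3 → ℂ)) = 15 := by
    simp [Module.finrank_tensorProduct, Module.finrank_fin_fun]
  have hker : 0 < Module.finrank ℂ ↥(LinearMap.ker (network16 T₁ T₂)) := by
    apply (Module.finrank_pos_iff (R := ℂ) (M := ↥(LinearMap.ker (network16 T₁ T₂)))).2
    exact nontrivial_of_ne ⟨x, by simpa [LinearMap.mem_ker] using hxker⟩ 0
      (by simp [Submodule.mk_eq_zero]; exact hx0)
  omega

def E3 (a : Fin 3) : Fin 3 → ℂ := Pi.single a 1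
def E5 (m : Fin 5) : Fin 5 → ℂ := Pi.single m 1
def E2 (j : Fin 2) : Fin 2 → ℂ := Pi.single j 1

def tvec : Fin 5 → (Fin 3 → ℂ) ⊗[ℂ] (Fin 2 → ℂ)
  | 0 => (E3 1 ⊗ₜ E2 0) + (E3 2 ⊗ₜ E2 0) - (E3 0 ⊗ₜ E2 1)
  | 1 => (E3 1 ⊗ₜ E2 0) + (E3 2 ⊗ₜ E2 0) + (E3 2 ⊗ₜ E2 1)
  | 2 => -(E3 1 ⊗ₜ E2 1)
  | 3 => -(E3 0 ⊗ₜ E2 0) - (E3 1 ⊗ₜ E2 0) - (E3 2 ⊗ₜ E2 0) - (E3 2 ⊗ₜ E2 1)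
  | 4 => (E3 0 ⊗ₜ E2 0) - (E3 2 ⊗ₜ E2 0) - (E3 2 ⊗ₜ E2 1)

def svec : Fin 2 × Fin 3 → (Fin 5 → ℂ)
  | (0, 0) => E5 1 + E5 2
  | (0, 1) => E5 2 + E5 3
  | (0, 2) => -E5 0 + E5 3
  | (1, 0) => E5 0 - E5 3
  | (1, 1) => -E5 2 - E5 3 - E5 4
  | (1, 2) => E5 3

def T1ex : (Fin 5 → ℂ) →ₗ[ℂ] (Fin 3 → ℂ) ⊗[ℂ] (Fin 2 → ℂ) := (Pi.basisFun ℂ (Fin 5)).constr ℂ tvec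
def T2ex : (Fin 2 → ℂ) ⊗[ℂ] (Fin 3 → ℂ) →ₗ[ℂ] (Fin 5 → ℂ) :=
  (((Pi.basisFun ℂ (Fin 2)).tensorProduct (Pi.basisFun ℂ (Fin 3)))).constr ℂ svec

lemma T1ex_single (k : Fin 5) : T1ex (Pi.single k 1) = tvec k := by
  rw [T1ex, show (Pi.single k 1 : Fin 5 → ℂ) = Pi.basisFun ℂ (Fin 5) k from
    (Pi.basisFun_apply ℂ (Fin 5) k).symm, Module.Basis.constr_basis]

lemma T2ex_single (j : Fin 2) (b : Fin 3) :
    T2ex ((Pi.single j 1 : Fin 2 → ℂ) ⊗ₜ (Pi.single b 1 : Fin 3 → ℂ)) = svec (j, b) := by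
  rw [T2ex, show (Pi.single j 1 : Fin 2 → ℂ) ⊗ₜ (Pi.single b 1 : Fin 3 → ℂ) =
    ((Pi.basisFun ℂ (Fin 2)).tensorProduct (Pi.basisFun ℂ (Fin 3))) (j, b) by
      rw [Module.Basis.tensorProduct_apply]; simp, Module.Basis.constr_basis]

lemma net_0_0 : network16 T1ex T2ex (E5 0 ⊗ₜ E3 0) = -(E3 0 ⊗ₜ E5 0) + (E3 0 ⊗ₜ E5 3) + (E3 1 ⊗ₜ E5 1) + (E3 1 ⊗ₜ E5 2) + (E3 2 ⊗ₜ E5 1) + (E3 2 ⊗ₜ E5 2) := by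
  rw [show E5 0 = Pi.single 0 1 from rfl, show E3 0 = Pi.single 0 1 from rfl,
    network16_tmul, T1ex_single, T2ex_single, T2ex_single]
  simp only [tvec, svec, map_add, map_sub, map_neg, map_smul, ctr_tmul, E2, E3, E5,
    Pi.single_apply]
  norm_num
  simp only [TensorProduct.add_tmul, TensorProduct.tmul_add, TensorProduct.sub_tmul,
    TensorProduct.tmul_sub, TensorProduct.neg_tmul, TensorProduct.tmul_neg]
  all_goals module

lemma net_0_1 : network16 T1ex T2ex (E5 0 ⊗ₜ E3 1) = (E3 0 ⊗ₜ E5 2) + (E3 0 ⊗ₜ E5 3) + (E3 0 ⊗ₜ E5 4) + (E3 1 ⊗ₜ E5 2) + (E3 1 ⊗ₜ E5 3) + (E3 2 ⊗ₜ E5 2) + (E3 2 ⊗ₜ E5 3) := by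
  rw [show E5 0 = Pi.single 0 1 from rfl, show E3 1 = Pi.single 1 1 from rfl,
    network16_tmul, T1ex_single, T2ex_single, T2ex_single]
  simp only [tvec, svec, map_add, map_sub, map_neg, map_smul, ctr_tmul, E2, E3, E5,
    Pi.single_apply]
  norm_num
  simp only [TensorProduct.add_tmul, TensorProduct.tmul_add, TensorProduct.sub_tmul,
    TensorProduct.tmul_sub, TensorProduct.neg_tmul, TensorProduct.tmul_neg]
  all_goals module

lemma net_0_2 : network16 T1ex T2ex (E5 0 ⊗ₜ E3 2) = -(E3 0 ⊗ₜ E5 3) - (E3 1 ⊗ₜ E5 0) + (E3 1 ⊗ₜ E5 3) - (E3 2 ⊗ₜ E5 0) + (E3 2 ⊗ₜ E5 3) := by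
  rw [show E5 0 = Pi.single 0 1 from rfl, show E3 2 = Pi.single 2 1 from rfl,
    network16_tmul, T1ex_single, T2ex_single, T2ex_single]
  simp only [tvec, svec, map_add, map_sub, map_neg, map_smul, ctr_tmul, E2, E3, E5,
    Pi.single_apply]
  norm_num
  simp only [TensorProduct.add_tmul, TensorProduct.tmul_add, TensorProduct.sub_tmul,
    TensorProduct.tmul_sub, TensorProduct.neg_tmul, TensorProduct.tmul_neg]
  all_goals module

lemma net_1_0 : network16 T1ex T2ex (E5 1 ⊗ₜ E3 0) = (E3 1 ⊗ₜ E5 1) + (E3 1 ⊗ₜ E5 2) + (E3 2 ⊗ₜ E5 0) + (E3 2 ⊗ₜ E5 1) + (E3 2 ⊗ₜ E5 2) - (E3 2 ⊗ₜ E5 3) := by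
  rw [show E5 1 = Pi.single 1 1 from rfl, show E3 0 = Pi.single 0 1 from rfl,
    network16_tmul, T1ex_single, T2ex_single, T2ex_single]
  simp only [tvec, svec, map_add, map_sub, map_neg, map_smul, ctr_tmul, E2, E3, E5,
    Pi.single_apply]
  norm_num
  simp only [TensorProduct.add_tmul, TensorProduct.tmul_add, TensorProduct.sub_tmul,
    TensorProduct.tmul_sub, TensorProduct.neg_tmul, TensorProduct.tmul_neg]
  all_goals module

lemma net_1_1 : network16 T1ex T2ex (E5 1 ⊗ₜ E3 1) = (E3 1 ⊗ₜ E5 2) + (E3 1 ⊗ₜ E5 3) - (E3 2 ⊗ₜ E5 4) := by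
  rw [show E5 1 = Pi.single 1 1 from rfl, show E3 1 = Pi.single 1 1 from rfl,
    network16_tmul, T1ex_single, T2ex_single, T2ex_single]
  simp only [tvec, svec, map_add, map_sub, map_neg, map_smul, ctr_tmul, E2, E3, E5,
    Pi.single_apply]
  norm_num
  simp only [TensorProduct.add_tmul, TensorProduct.tmul_add, TensorProduct.sub_tmul,
    TensorProduct.tmul_sub, TensorProduct.neg_tmul, TensorProduct.tmul_neg]
  all_goals module

lemma net_1_2 : network16 T1ex T2ex (E5 1 ⊗ₜ E3 2) = -(E3 1 ⊗ₜ E5 0) + (E3 1 ⊗ₜ E5 3) - (E3 2 ⊗ₜ E5 0) + (2:ℂ) • (E3 2 ⊗ₜ E5 3) := by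
  rw [show E5 1 = Pi.single 1 1 from rfl, show E3 2 = Pi.single 2 1 from rfl,
    network16_tmul, T1ex_single, T2ex_single, T2ex_single]
  simp only [tvec, svec, map_add, map_sub, map_neg, map_smul, ctr_tmul, E2, E3, E5,
    Pi.single_apply]
  norm_num
  simp only [TensorProduct.add_tmul, TensorProduct.tmul_add, TensorProduct.sub_tmul,
    TensorProduct.tmul_sub, TensorProduct.neg_tmul, TensorProduct.tmul_neg]
  all_goals module

lemma net_2_0 : network16 T1ex T2ex (E5 2 ⊗ₜ E3 0) = -(E3 1 ⊗ₜ E5 0) + (E3 1 ⊗ₜ E5 3) := by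
  rw [show E5 2 = Pi.single 2 1 from rfl, show E3 0 = Pi.single 0 1 from rfl,
    network16_tmul, T1ex_single, T2ex_single, T2ex_single]
  simp only [tvec, svec, map_add, map_sub, map_neg, map_smul, ctr_tmul, E2, E3, E5,
    Pi.single_apply]
  norm_num
  simp only [TensorProduct.add_tmul, TensorProduct.tmul_add, TensorProduct.sub_tmul,
    TensorProduct.tmul_sub, TensorProduct.neg_tmul, TensorProduct.tmul_neg]
  all_goals module

lemma net_2_1 : network16 T1ex T2ex (E5 2 ⊗ₜ E3 1) = (E3 1 ⊗ₜ E5 2) + (E3 1 ⊗ₜ E5 3) + (E3 1 ⊗ₜ E5 4) := by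
  rw [show E5 2 = Pi.single 2 1 from rfl, show E3 1 = Pi.single 1 1 from rfl,
    network16_tmul, T1ex_single, T2ex_single, T2ex_single]
  simp only [tvec, svec, map_add, map_sub, map_neg, map_smul, ctr_tmul, E2, E3, E5,
    Pi.single_apply]
  norm_num
  simp only [TensorProduct.add_tmul, TensorProduct.tmul_add, TensorProduct.sub_tmul,
    TensorProduct.tmul_sub, TensorProduct.neg_tmul, TensorProduct.tmul_neg]
  all_goals module

lemma net_2_2 : network16 T1ex T2ex (E5 2 ⊗ₜ E3 2) = -(E3 1 ⊗ₜ E5 3) := by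
  rw [show E5 2 = Pi.single 2 1 from rfl, show E3 2 = Pi.single 2 1 from rfl,
    network16_tmul, T1ex_single, T2ex_single, T2ex_single]
  simp only [tvec, svec, map_add, map_sub, map_neg, map_smul, ctr_tmul, E2, E3, E5,
    Pi.single_apply]
  norm_num
  simp only [TensorProduct.add_tmul, TensorProduct.tmul_add, TensorProduct.sub_tmul,
    TensorProduct.tmul_sub, TensorProduct.neg_tmul, TensorProduct.tmul_neg]
  all_goals module

lemma net_3_0 : network16 T1ex T2ex (E5 3 ⊗ₜ E3 0) = -(E3 0 ⊗ₜ E5 1) - (E3 0 ⊗ₜ E5 2) - (E3 1 ⊗ₜ E5 1) - (E3 1 ⊗ₜ E5 2) - (E3 2 ⊗ₜ E5 0) - (E3 2 ⊗ₜ E5 1) - (E3 2 ⊗ₜ E5 2) + (E3 2 ⊗ₜ E5 3) := by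
  rw [show E5 3 = Pi.single 3 1 from rfl, show E3 0 = Pi.single 0 1 from rfl,
    network16_tmul, T1ex_single, T2ex_single, T2ex_single]
  simp only [tvec, svec, map_add, map_sub, map_neg, map_smul, ctr_tmul, E2, E3, E5,
    Pi.single_apply]
  norm_num
  simp only [TensorProduct.add_tmul, TensorProduct.tmul_add, TensorProduct.sub_tmul,
    TensorProduct.tmul_sub, TensorProduct.neg_tmul, TensorProduct.tmul_neg]
  all_goals module

lemma net_3_1 : network16 T1ex T2ex (E5 3 ⊗ₜ E3 1) = -(E3 0 ⊗ₜ E5 2) - (E3 0 ⊗ₜ E5 3) - (E3 1 ⊗ₜ E5 2) - (E3 1 ⊗ₜ E5 3) + (E3 2 ⊗ₜ E5 4) := by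
  rw [show E5 3 = Pi.single 3 1 from rfl, show E3 1 = Pi.single 1 1 from rfl,
    network16_tmul, T1ex_single, T2ex_single, T2ex_single]
  simp only [tvec, svec, map_add, map_sub, map_neg, map_smul, ctr_tmul, E2, E3, E5,
    Pi.single_apply]
  norm_num
  simp only [TensorProduct.add_tmul, TensorProduct.tmul_add, TensorProduct.sub_tmul,
    TensorProduct.tmul_sub, TensorProduct.neg_tmul, TensorProduct.tmul_neg]
  all_goals module

lemma net_3_2 : network16 T1ex T2ex (E5 3 ⊗ₜ E3 2) = (E3 0 ⊗ₜ E5 0) - (E3 0 ⊗ₜ E5 3) + (E3 1 ⊗ₜ E5 0) - (E3 1 ⊗ₜ E5 3) + (E3 2 ⊗ₜ E5 0) - (2:ℂ) • (E3 2 ⊗ₜ E5 3) := by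
  rw [show E5 3 = Pi.single 3 1 from rfl, show E3 2 = Pi.single 2 1 from rfl,
    network16_tmul, T1ex_single, T2ex_single, T2ex_single]
  simp only [tvec, svec, map_add, map_sub, map_neg, map_smul, ctr_tmul, E2, E3, E5,
    Pi.single_apply]
  norm_num
  simp only [TensorProduct.add_tmul, TensorProduct.tmul_add, TensorProduct.sub_tmul,
    TensorProduct.tmul_sub, TensorProduct.neg_tmul, TensorProduct.tmul_neg]
  all_goals module

lemma net_4_0 : network16 T1ex T2ex (E5 4 ⊗ₜ E3 0) = (E3 0 ⊗ₜ E5 1) + (E3 0 ⊗ₜ E5 2) - (E3 2 ⊗ₜ E5 0) - (E3 2 ⊗ₜ E5 1) - (E3 2 ⊗ₜ E5 2) + (E3 2 ⊗ₜ E5 3) := by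
  rw [show E5 4 = Pi.single 4 1 from rfl, show E3 0 = Pi.single 0 1 from rfl,
    network16_tmul, T1ex_single, T2ex_single, T2ex_single]
  simp only [tvec, svec, map_add, map_sub, map_neg, map_smul, ctr_tmul, E2, E3, E5,
    Pi.single_apply]
  norm_num
  simp only [TensorProduct.add_tmul, TensorProduct.tmul_add, TensorProduct.sub_tmul,
    TensorProduct.tmul_sub, TensorProduct.neg_tmul, TensorProduct.tmul_neg]
  all_goals module

lemma net_4_1 : network16 T1ex T2ex (E5 4 ⊗ₜ E3 1) = (E3 0 ⊗ₜ E5 2) + (E3 0 ⊗ₜ E5 3) + (E3 2 ⊗ₜ E5 4) := by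
  rw [show E5 4 = Pi.single 4 1 from rfl, show E3 1 = Pi.single 1 1 from rfl,
    network16_tmul, T1ex_single, T2ex_single, T2ex_single]
  simp only [tvec, svec, map_add, map_sub, map_neg, map_smul, ctr_tmul, E2, E3, E5,
    Pi.single_apply]
  norm_num
  simp only [TensorProduct.add_tmul, TensorProduct.tmul_add, TensorProduct.sub_tmul,
    TensorProduct.tmul_sub, TensorProduct.neg_tmul, TensorProduct.tmul_neg]
  all_goals module

lemma net_4_2 : network16 T1ex T2ex (E5 4 ⊗ₜ E3 2) = -(E3 0 ⊗ₜ E5 0) + (E3 0 ⊗ₜ E5 3) + (E3 2 ⊗ₜ E5 0) - (2:ℂ) • (E3 2 ⊗ₜ E5 3) := by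
  rw [show E5 4 = Pi.single 4 1 from rfl, show E3 2 = Pi.single 2 1 from rfl,
    network16_tmul, T1ex_single, T2ex_single, T2ex_single]
  simp only [tvec, svec, map_add, map_sub, map_neg, map_smul, ctr_tmul, E2, E3, E5,
    Pi.single_apply]
  norm_num
  simp only [TensorProduct.add_tmul, TensorProduct.tmul_add, TensorProduct.sub_tmul,
    TensorProduct.tmul_sub, TensorProduct.neg_tmul, TensorProduct.tmul_neg]
  all_goals module

lemma sol_0 : network16 T1ex T2ex ((E5 0 ⊗ₜ E3 0) - (E5 0 ⊗ₜ E3 2) - (E5 1 ⊗ₜ E3 0) + (2:ℂ) • (E5 1 ⊗ₜ E3 2) + (E5 2 ⊗ₜ E3 0) + (2:ℂ) • (E5 3 ⊗ₜ E3 2)) = (E3 0 ⊗ₜ E5 0) := by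
  simp only [map_add, map_sub, map_neg, map_smul, net_0_0, net_0_2, net_1_0, net_1_2, net_2_0, net_3_2]
  module

lemma sol_1 : network16 T1ex T2ex ((E5 0 ⊗ₜ E3 0) - (E5 0 ⊗ₜ E3 2) - (2:ℂ) • (E5 1 ⊗ₜ E3 0) + (E5 1 ⊗ₜ E3 1) + (E5 1 ⊗ₜ E3 2) + (E5 2 ⊗ₜ E3 0) - (E5 3 ⊗ₜ E3 0) + (E5 3 ⊗ₜ E3 1) + (E5 3 ⊗ₜ E3 2)) = (E3 0 ⊗ₜ E5 1) := by
  simp only [map_add, map_sub, map_neg, map_smul, net_0_0, net_0_2, net_1_0, net_1_1, net_1_2, net_2_0, net_3_0, net_3_1, net_3_2]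
  module

lemma sol_2 : network16 T1ex T2ex (-(E5 0 ⊗ₜ E3 0) + (E5 0 ⊗ₜ E3 2) + (E5 1 ⊗ₜ E3 0) - (E5 1 ⊗ₜ E3 1) - (E5 1 ⊗ₜ E3 2) - (E5 2 ⊗ₜ E3 0) - (E5 3 ⊗ₜ E3 1) - (E5 3 ⊗ₜ E3 2)) = (E3 0 ⊗ₜ E5 2) := by
  simp only [map_add, map_sub, map_neg, map_smul, net_0_0, net_0_2, net_1_0, net_1_1, net_1_2, net_2_0, net_3_1, net_3_2]
  module

lemma sol_3 : network16 T1ex T2ex ((E5 0 ⊗ₜ E3 0) - (E5 0 ⊗ₜ E3 2) - (E5 1 ⊗ₜ E3 0) + (E5 1 ⊗ₜ E3 2) + (E5 2 ⊗ₜ E3 0) + (E5 3 ⊗ₜ E3 2)) = (E3 0 ⊗ₜ E5 3) := by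
  simp only [map_add, map_sub, map_neg, map_smul, net_0_0, net_0_2, net_1_0, net_1_2, net_2_0, net_3_2]
  module

lemma sol_4 : network16 T1ex T2ex (-(E5 2 ⊗ₜ E3 0) - (E5 2 ⊗ₜ E3 2)) = (E3 1 ⊗ₜ E5 0) := by
  simp only [map_add, map_sub, map_neg, map_smul, net_2_0, net_2_2]
  module

lemma sol_5 : network16 T1ex T2ex ((2:ℂ) • (E5 1 ⊗ₜ E3 0) - (2:ℂ) • (E5 1 ⊗ₜ E3 1) - (E5 2 ⊗ₜ E3 2) + (E5 3 ⊗ₜ E3 0) - (E5 3 ⊗ₜ E3 1) + (E5 4 ⊗ₜ E3 0) - (E5 4 ⊗ₜ E3 1)) = (E3 1 ⊗ₜ E5 1) := by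
  simp only [map_add, map_sub, map_neg, map_smul, net_1_0, net_1_1, net_2_2, net_3_0, net_3_1, net_4_0, net_4_1]
  module

lemma sol_6 : network16 T1ex T2ex ((2:ℂ) • (E5 1 ⊗ₜ E3 1) + (E5 2 ⊗ₜ E3 2) + (E5 3 ⊗ₜ E3 1) + (E5 4 ⊗ₜ E3 1)) = (E3 1 ⊗ₜ E5 2) := by
  simp only [map_add, map_sub, map_neg, map_smul, net_1_1, net_2_2, net_3_1, net_4_1]
  module

lemma sol_7 : network16 T1ex T2ex (-(E5 2 ⊗ₜ E3 2)) = (E3 1 ⊗ₜ E5 3) := by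
  simp only [map_add, map_sub, map_neg, map_smul, net_2_2]
  module

lemma sol_8 : network16 T1ex T2ex ((-2:ℂ) • (E5 1 ⊗ₜ E3 1) + (E5 2 ⊗ₜ E3 1) - (E5 3 ⊗ₜ E3 1) - (E5 4 ⊗ₜ E3 1)) = (E3 1 ⊗ₜ E5 4) := by
  simp only [map_add, map_sub, map_neg, map_smul, net_1_1, net_2_1, net_3_1, net_4_1]
  module

lemma sol_9 : network16 T1ex T2ex ((-2:ℂ) • (E5 0 ⊗ₜ E3 0) + (2:ℂ) • (E5 1 ⊗ₜ E3 0) - (E5 1 ⊗ₜ E3 2) - (E5 2 ⊗ₜ E3 0) - (2:ℂ) • (E5 3 ⊗ₜ E3 2)) = (E3 2 ⊗ₜ E5 0) := by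
  simp only [map_add, map_sub, map_neg, map_smul, net_0_0, net_1_0, net_1_2, net_2_0, net_3_2]
  module

lemma sol_10 : network16 T1ex T2ex (-(E5 0 ⊗ₜ E3 1) - (E5 1 ⊗ₜ E3 0) + (E5 1 ⊗ₜ E3 1) + (E5 1 ⊗ₜ E3 2) - (E5 2 ⊗ₜ E3 0) - (E5 3 ⊗ₜ E3 0) - (E5 4 ⊗ₜ E3 0) + (E5 4 ⊗ₜ E3 1)) = -(E3 0 ⊗ₜ E5 4) + (E3 2 ⊗ₜ E5 1) := by
  simp only [map_add, map_sub, map_neg, map_smul, net_0_1, net_1_0, net_1_1, net_1_2, net_2_0, net_3_0, net_4_0, net_4_1]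
  module

lemma sol_11 : network16 T1ex T2ex ((E5 0 ⊗ₜ E3 0) + (E5 0 ⊗ₜ E3 1) - (E5 1 ⊗ₜ E3 0) - (E5 1 ⊗ₜ E3 1) + (E5 2 ⊗ₜ E3 0) + (E5 3 ⊗ₜ E3 2) - (E5 4 ⊗ₜ E3 1)) = (E3 0 ⊗ₜ E5 4) + (E3 2 ⊗ₜ E5 2) := by
  simp only [map_add, map_sub, map_neg, map_smul, net_0_0, net_0_1, net_1_0, net_1_1, net_2_0, net_3_2, net_4_1]
  module

lemma sol_12 : network16 T1ex T2ex (-(E5 0 ⊗ₜ E3 0) + (E5 1 ⊗ₜ E3 0) - (E5 2 ⊗ₜ E3 0) - (E5 3 ⊗ₜ E3 2)) = (E3 2 ⊗ₜ E5 3) := by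
  simp only [map_add, map_sub, map_neg, map_smul, net_0_0, net_1_0, net_2_0, net_3_2]
  module

lemma sol_13 : network16 T1ex T2ex ((E5 1 ⊗ₜ E3 1) + (E5 3 ⊗ₜ E3 1) + (E5 4 ⊗ₜ E3 1)) = (E3 2 ⊗ₜ E5 4) := by
  simp only [map_add, map_sub, map_neg, map_smul, net_1_1, net_3_1, net_4_1]
  module

def Wvec : Fin 14 → (Fin 3 → ℂ) ⊗[ℂ] (Fin 5 → ℂ)
  | 0 => (E3 0 ⊗ₜ E5 0)
  | 1 => (E3 0 ⊗ₜ E5 1)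
  | 2 => (E3 0 ⊗ₜ E5 2)
  | 3 => (E3 0 ⊗ₜ E5 3)
  | 4 => (E3 1 ⊗ₜ E5 0)
  | 5 => (E3 1 ⊗ₜ E5 1)
  | 6 => (E3 1 ⊗ₜ E5 2)
  | 7 => (E3 1 ⊗ₜ E5 3)
  | 8 => (E3 1 ⊗ₜ E5 4)
  | 9 => (E3 2 ⊗ₜ E5 0)
  | 10 => -(E3 0 ⊗ₜ E5 4) + (E3 2 ⊗ₜ E5 1)
  | 11 => (E3 0 ⊗ₜ E5 4) + (E3 2 ⊗ₜ E5 2)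
  | 12 => (E3 2 ⊗ₜ E5 3)
  | 13 => (E3 2 ⊗ₜ E5 4)

def kap : Fin 14 → Fin 3 × Fin 5
  | 0 => (0, 0)
  | 1 => (0, 1)
  | 2 => (0, 2)
  | 3 => (0, 3)
  | 4 => (1, 0)
  | 5 => (1, 1)
  | 6 => (1, 2)
  | 7 => (1, 3)
  | 8 => (1, 4)
  | 9 => (2, 0)
  | 10 => (2, 1)
  | 11 => (2, 2)
  | 12 => (2, 3)
  | 13 => (2, 4)

def proj04 : (Fin 3 × Fin 5 → ℂ) →ₗ[ℂ] (Fin 3 × Fin 5 → ℂ) :=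
  LinearMap.pi (fun p => if p = ((0 : Fin 3), (4 : Fin 5)) then 0 else LinearMap.proj p)

lemma proj04_single (q : Fin 3 × Fin 5) (h : q ≠ ((0 : Fin 3), (4 : Fin 5))) :
    proj04 (Pi.single q 1) = Pi.single q 1 := by
  funext p
  by_cases hp : p = ((0 : Fin 3), (4 : Fin 5))
  · subst hp
    simp [proj04, LinearMap.pi_apply, Pi.single_apply, Ne.symm h]
  · simp [proj04, LinearMap.pi_apply, hp]

lemma proj04_single04 : proj04 (Pi.single ((0 : Fin 3), (4 : Fin 5)) 1) = 0 := by
  funext p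
  by_cases hp : p = ((0 : Fin 3), (4 : Fin 5))
  · subst hp; simp [proj04]
  · simp [proj04, LinearMap.pi_apply, hp, Pi.single_apply]

lemma coords_single (a : Fin 3) (m : Fin 5) :
    tcoords 3 5 ((Pi.single a 1 : Fin 3 → ℂ) ⊗ₜ (Pi.single m 1 : Fin 5 → ℂ)) =
      Pi.single ((a, m) : Fin 3 × Fin 5) 1 := by
  funext p
  obtain ⟨x, y⟩ := p
  simp only [tcoords_tmul, Pi.single_apply, Prod.mk.injEq]
  by_cases hx : x = a <;> by_cases hy : y = m <;> simp [hx, hy]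

lemma wimg_0 : proj04 (tcoords 3 5 ((E3 0 ⊗ₜ E5 0))) = Pi.single ((0 : Fin 3), (0 : Fin 5)) 1 := by
  simp only [E3, E5, coords_single]
  exact proj04_single _ (by decide)

lemma wimg_1 : proj04 (tcoords 3 5 ((E3 0 ⊗ₜ E5 1))) = Pi.single ((0 : Fin 3), (1 : Fin 5)) 1 := by
  simp only [E3, E5, coords_single]
  exact proj04_single _ (by decide)

lemma wimg_2 : proj04 (tcoords 3 5 ((E3 0 ⊗ₜ E5 2))) = Pi.single ((0 : Fin 3), (2 : Fin 5)) 1 := by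
  simp only [E3, E5, coords_single]
  exact proj04_single _ (by decide)

lemma wimg_3 : proj04 (tcoords 3 5 ((E3 0 ⊗ₜ E5 3))) = Pi.single ((0 : Fin 3), (3 : Fin 5)) 1 := by
  simp only [E3, E5, coords_single]
  exact proj04_single _ (by decide)

lemma wimg_4 : proj04 (tcoords 3 5 ((E3 1 ⊗ₜ E5 0))) = Pi.single ((1 : Fin 3), (0 : Fin 5)) 1 := by
  simp only [E3, E5, coords_single]
  exact proj04_single _ (by decide)

lemma wimg_5 : proj04 (tcoords 3 5 ((E3 1 ⊗ₜ E5 1))) = Pi.single ((1 : Fin 3), (1 : Fin 5)) 1 := by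
  simp only [E3, E5, coords_single]
  exact proj04_single _ (by decide)

lemma wimg_6 : proj04 (tcoords 3 5 ((E3 1 ⊗ₜ E5 2))) = Pi.single ((1 : Fin 3), (2 : Fin 5)) 1 := by
  simp only [E3, E5, coords_single]
  exact proj04_single _ (by decide)

lemma wimg_7 : proj04 (tcoords 3 5 ((E3 1 ⊗ₜ E5 3))) = Pi.single ((1 : Fin 3), (3 : Fin 5)) 1 := by
  simp only [E3, E5, coords_single]
  exact proj04_single _ (by decide)

lemma wimg_8 : proj04 (tcoords 3 5 ((E3 1 ⊗ₜ E5 4))) = Pi.single ((1 : Fin 3), (4 : Fin 5)) 1 := by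
  simp only [E3, E5, coords_single]
  exact proj04_single _ (by decide)

lemma wimg_9 : proj04 (tcoords 3 5 ((E3 2 ⊗ₜ E5 0))) = Pi.single ((2 : Fin 3), (0 : Fin 5)) 1 := by
  simp only [E3, E5, coords_single]
  exact proj04_single _ (by decide)

lemma wimg_10 : proj04 (tcoords 3 5 (-(E3 0 ⊗ₜ E5 4) + (E3 2 ⊗ₜ E5 1))) = Pi.single ((2 : Fin 3), (1 : Fin 5)) 1 := by
  simp only [E3, E5, map_add, map_sub, map_neg, coords_single, proj04_single04]
  rw [proj04_single _ (by decide)]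
  simp

lemma wimg_11 : proj04 (tcoords 3 5 ((E3 0 ⊗ₜ E5 4) + (E3 2 ⊗ₜ E5 2))) = Pi.single ((2 : Fin 3), (2 : Fin 5)) 1 := by
  simp only [E3, E5, map_add, map_sub, map_neg, coords_single, proj04_single04]
  rw [proj04_single _ (by decide)]
  simp

lemma wimg_12 : proj04 (tcoords 3 5 ((E3 2 ⊗ₜ E5 3))) = Pi.single ((2 : Fin 3), (3 : Fin 5)) 1 := by
  simp only [E3, E5, coords_single]
  exact proj04_single _ (by decide)

lemma wimg_13 : proj04 (tcoords 3 5 ((E3 2 ⊗ₜ E5 4))) = Pi.single ((2 : Fin 3), (4 : Fin 5)) 1 := by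
  simp only [E3, E5, coords_single]
  exact proj04_single _ (by decide)

lemma Wvec_mem : ∀ i, Wvec i ∈ LinearMap.range (network16 T1ex T2ex) := by
  intro i
  fin_cases i
  · exact ⟨_, sol_0⟩
  · exact ⟨_, sol_1⟩
  · exact ⟨_, sol_2⟩
  · exact ⟨_, sol_3⟩
  · exact ⟨_, sol_4⟩
  · exact ⟨_, sol_5⟩
  · exact ⟨_, sol_6⟩
  · exact ⟨_, sol_7⟩
  · exact ⟨_, sol_8⟩
  · exact ⟨_, sol_9⟩
  · exact ⟨_, sol_10⟩
  · exact ⟨_, sol_11⟩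
  · exact ⟨_, sol_12⟩
  · exact ⟨_, sol_13⟩

lemma Wvec_indep : LinearIndependent ℂ Wvec := by
  apply LinearIndependent.of_comp (proj04 ∘ₗ tcoords 3 5)
  have hk : Function.Injective kap := by decide
  have hb := ((Pi.basisFun ℂ (Fin 3 × Fin 5)).linearIndependent).comp kap hk
  have heq : (⇑(proj04 ∘ₗ tcoords 3 5) ∘ Wvec) = (⇑(Pi.basisFun ℂ (Fin 3 × Fin 5)) ∘ kap) := by
    funext i
    simp only [Function.comp_apply, LinearMap.coe_comp, Pi.basisFun_apply]
    fin_cases i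
    · exact wimg_0
    · exact wimg_1
    · exact wimg_2
    · exact wimg_3
    · exact wimg_4
    · exact wimg_5
    · exact wimg_6
    · exact wimg_7
    · exact wimg_8
    · exact wimg_9
    · exact wimg_10
    · exact wimg_11
    · exact wimg_12
    · exact wimg_13
  rw [heq]
  exact hb

lemma network16_rank_ge :
    14 ≤ Module.finrank ℂ ↥(LinearMap.range (network16 T1ex T2ex)) := by
  have hspan : Submodule.span ℂ (Set.range Wvec) ≤ LinearMap.range (network16 T1ex T2ex) :=
    Submodule.span_le.2 (Set.range_subset_iff.2 Wvec_mem)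
  have h14 : Module.finrank ℂ ↥(Submodule.span ℂ (Set.range Wvec)) = 14 := by
    rw [finrank_span_eq_card Wvec_indep]
    simp
  exact h14 ▸ Submodule.finrank_mono hspan

/-- For every choice of `T₁ : ℂ⁵ → ℂ³ ⊗ ℂ²` and `T₂ : ℂ² ⊗ ℂ³ → ℂ⁵`, the map
`(Id ⊗ T₂) ∘ (T₁ ⊗ Id)` has rank at most 14, and rank 14 is achieved; so the quantum
max-flow of this network is 14, strictly below the quantum min-cut 15. -/
theorem stmt_16 :
    (∀ (T₁ : (Fin 5 → ℂ) →ₗ[ℂ] (Fin 3 → ℂ) ⊗[ℂ] (Fin 2 → ℂ))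
        (T₂ : (Fin 2 → ℂ) ⊗[ℂ] (Fin 3 → ℂ) →ₗ[ℂ] (Fin 5 → ℂ)),
      Module.finrank ℂ ↥(LinearMap.range (network16 T₁ T₂)) ≤ 14) ∧
    (∃ (T₁ : (Fin 5 → ℂ) →ₗ[ℂ] (Fin 3 → ℂ) ⊗[ℂ] (Fin 2 → ℂ))
        (T₂ : (Fin 2 → ℂ) ⊗[ℂ] (Fin 3 → ℂ) →ₗ[ℂ] (Fin 5 → ℂ)),
      Module.finrank ℂ ↥(LinearMap.range (network16 T₁ T₂)) = 14) :=
  ⟨network16_rank_le, T1ex, T2ex, le_antisymm (network16_rank_le T1ex T2ex) network16_rank_ge⟩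

end
end

section
/- Let T : ℂ²⊗ℂ²⊗ℂ² → ℂ be the tensor with T(e_i⊗e_j⊗e_k) = 1 if i=j=k and 0 otherwise ('copy tensor' S), and let D be any 2×2 complex matrix. Define Φ : ℂ²⊗ℂ² → ℂ²⊗ℂ² by Φ|i,j⟩ = Σ_{k,l} F(i,j;k,l)|k,l⟩ where F(i,j;k,l) = D_{ik} D_{kj} D_{jl} D_{li} (indices in {0,1}). Then F(i,j;k,l) = F(j,i;k,l) for all i,j,k,l; in particular Φ|0,1⟩ = Φ|1,0⟩ and rank(Φ) ≤ 3. -/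
/-- Contracting four copy tensors in a square with matrix `D` on internal edges gives
`F(i,j;k,l) = D_{ik} D_{kj} D_{jl} D_{li}`, which is symmetric in `(i,j)`; hence the
resulting map `Φ` satisfies `Φ|01⟩ = Φ|10⟩` and has rank at most 3. -/
theorem stmt_17 (D : Matrix (Fin 2) (Fin 2) ℂ)
    (F : Fin 2 → Fin 2 → Fin 2 → Fin 2 → ℂ)
    (hF : ∀ i j k l, F i j k l = D i k * D k j * D j l * D l i)
    (Φ : Matrix (Fin 2 × Fin 2) (Fin 2 × Fin 2) ℂ)
    (hΦ : ∀ kl ij, Φ kl ij = F ij.1 ij.2 kl.1 kl.2) :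
    (∀ i j k l, F i j k l = F j i k l) ∧
      (∀ kl : Fin 2 × Fin 2, Φ kl (0, 1) = Φ kl (1, 0)) ∧
      Φ.rank ≤ 3 := by
  have hFsymm : ∀ i j k l, F i j k l = F j i k l := by
    intro i j k l; rw [hF, hF]; fin_cases i <;> fin_cases j <;> fin_cases k <;> fin_cases l <;> ring
  have hcol : ∀ kl : Fin 2 × Fin 2, Φ kl (0, 1) = Φ kl (1, 0) := by
    intro kl; rw [hΦ, hΦ]; exact hFsymm 0 1 kl.1 kl.2
  refine ⟨hFsymm, hcol, ?_⟩
  have hT : Φ.transpose (1, 0) = Φ.transpose (0, 1) := by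
    funext kl; exact (hcol kl).symm
  have hrange : Set.range Φ.transpose =
      ↑(Finset.image Φ.transpose {((0 : Fin 2), (0 : Fin 2)), (0, 1), (1, 1)}) := by
    ext v
    rw [Finset.mem_coe]
    erw [Finset.mem_image]
    simp only [Set.mem_range, Finset.mem_insert, Finset.mem_singleton]
    constructor
    · rintro ⟨ij, rfl⟩
      fin_cases ij
      · exact ⟨(0, 0), Or.inl rfl, rfl⟩
      · exact ⟨(0, 1), Or.inr (Or.inl rfl), rfl⟩
      · exact ⟨(0, 1), Or.inr (Or.inl rfl), by exact (by simpa using hT : _ = _).symm⟩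
      · exact ⟨(1, 1), Or.inr (Or.inr rfl), rfl⟩
    · rintro ⟨ij, _, rfl⟩
      exact ⟨ij, rfl⟩
  rw [Matrix.rank_eq_finrank_span_cols]
  change Module.finrank ℂ (Submodule.span ℂ (Set.range Φ.transpose)) ≤ 3
  rw [hrange]
  refine le_trans (finrank_span_finset_le_card _) (le_trans Finset.card_image_le ?_)
  exact le_trans (Finset.card_insert_le _ _) (by
    exact Nat.succ_le_succ (le_trans (Finset.card_insert_le _ _)
      (Nat.succ_le_succ (Finset.card_singleton _).le)))
end

section
/- Let G be a finite undirected graph with degree-1 open ends partitioned into sources S and sinks T. Then the maximum number of pairwise edge-disjoint paths from S to T equals the minimum cardinality of an edge cut set separating S from T (undirected Menger's theorem). -/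
open SimpleGraph Finset

set_option linter.unusedSectionVars false

namespace Menger18

variable {V : Type*} [Fintype V] [DecidableEq V] (G : SimpleGraph V) [DecidableRel G.Adj]

def out (g : V → V → ℤ) (v : V) : ℤ := ∑ u : V, g v u

noncomputable def setFin (S : Set V) : Finset V :=
  @Finset.filter _ (· ∈ S) (Classical.decPred _) Finset.univ

lemma mem_setFin {S : Set V} {v : V} : v ∈ setFin S ↔ v ∈ S := by
  simp [setFin]

noncomputable def value (S : Set V) (g : V → V → ℤ) : ℤ := ∑ v ∈ setFin S, out g v

/-- dart pair list of a walk -/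
def pl {a b : V} (W : G.Walk a b) : List (V × V) := W.darts.map SimpleGraph.Dart.toProd

def cnt {a b : V} (W : G.Walk a b) (x y : V) : ℕ := (pl G W).count (x, y)

lemma cnt_nil {a : V} (x y : V) : cnt G (SimpleGraph.Walk.nil : G.Walk a a) x y = 0 := by
  simp [cnt, pl]

lemma cnt_cons {a c b : V} (h : G.Adj a c) (W : G.Walk c b) (x y : V) :
    cnt G (SimpleGraph.Walk.cons h W) x y
      = cnt G W x y + (if (a, c) = (x, y) then 1 else 0) := by
  simp only [cnt, pl, SimpleGraph.Walk.darts_cons, List.map_cons, List.count_cons]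
  split_ifs with h1 <;> simp_all [beq_iff_eq]

lemma cnt_mem {a b : V} {W : G.Walk a b} {x y : V} (h : cnt G W x y ≠ 0) :
    ∃ d ∈ W.darts, d.toProd = (x, y) := by
  have : (x, y) ∈ pl G W := List.count_pos_iff.1 (Nat.pos_of_ne_zero h)
  obtain ⟨d, hd, he⟩ := List.mem_map.1 this
  exact ⟨d, hd, he⟩

lemma sum_cnt_fst_sub_snd {a b : V} (W : G.Walk a b) (v : V) :
    (∑ u : V, (cnt G W v u : ℤ)) - (∑ u : V, (cnt G W u v : ℤ))
      = (if v = a then 1 else 0) - (if v = b then 1 else 0) := by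
  induction W with
  | nil => simp [cnt_nil]
  | @cons a c b h W ih =>
    simp only [cnt_cons]
    push_cast
    rw [Finset.sum_add_distrib, Finset.sum_add_distrib]
    have key1 : ∀ u : V, (if (a, c) = (v, u) then (1:ℤ) else 0)
        = (if v = a then 1 else 0) * (if u = c then 1 else 0) := by
      intro u; split_ifs <;> simp_all [Prod.ext_iff]
    have key2 : ∀ u : V, (if (a, c) = (u, v) then (1:ℤ) else 0)
        = (if v = c then 1 else 0) * (if u = a then 1 else 0) := by
      intro u; split_ifs <;> simp_all [Prod.ext_iff]
    simp_rw [key1, key2]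
    rw [← Finset.mul_sum, ← Finset.mul_sum]
    have e1 : (∑ u : V, (if u = c then (1:ℤ) else 0)) = 1 := by simp
    have e2 : (∑ u : V, (if u = a then (1:ℤ) else 0)) = 1 := by simp
    rw [e1, e2, mul_one, mul_one]
    linarith [ih]

lemma dart_eq_of_edge {x y : V} (d : G.Dart) (h : d.edge = s(x, y)) :
    d.toProd = (x, y) ∨ d.toProd = (y, x) := by
  obtain ⟨⟨p, q⟩, hadj⟩ := d
  simp only [SimpleGraph.Dart.edge, Sym2.eq_iff] at h
  rcases h with ⟨rfl, rfl⟩ | ⟨rfl, rfl⟩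
  · exact Or.inl rfl
  · exact Or.inr rfl

lemma dart_edge_eq (d : G.Dart) : d.edge = s(d.toProd.1, d.toProd.2) := by
  obtain ⟨⟨p, q⟩, hadj⟩ := d; rfl

lemma count_dart_aux (x y : V) :
    ∀ L : List G.Dart, (L.map SimpleGraph.Dart.edge).Nodup →
      (L.map SimpleGraph.Dart.toProd).count (x, y)
        + (L.map SimpleGraph.Dart.toProd).count (y, x) ≤ 1 := by
  intro L
  induction L with
  | nil => simp
  | cons d L ih =>
    intro hnd
    simp only [List.map_cons, List.nodup_cons] at hnd
    by_cases hxy : x = y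
    · subst hxy
      have hz : ∀ M : List G.Dart, ((M.map SimpleGraph.Dart.toProd).count (x, x)) = 0 := by
        intro M
        rw [List.count_eq_zero]
        intro hmem
        obtain ⟨d', _, hd'⟩ := List.mem_map.1 hmem
        exact G.irrefl (hd' ▸ d'.adj)
      have := hz (d :: L)
      omega
    by_cases hd : d.toProd = (x, y) ∨ d.toProd = (y, x)
    · have hedge : d.edge = s(x, y) := by
        rcases hd with h | h <;> rw [dart_edge_eq, h]
        exact Sym2.eq_swap
      have hz : ∀ p : V × V, p = (x, y) ∨ p = (y, x) →
          (L.map SimpleGraph.Dart.toProd).count p = 0 := by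
        intro p hp
        rw [List.count_eq_zero]
        intro hmem
        obtain ⟨d', hd', hpd⟩ := List.mem_map.1 hmem
        apply hnd.1
        refine List.mem_map.2 ⟨d', hd', ?_⟩
        rw [dart_edge_eq, hedge, hpd]
        rcases hp with rfl | rfl
        · rfl
        · exact Sym2.eq_swap
      have h1 := hz _ (Or.inl rfl)
      have h2 := hz _ (Or.inr rfl)
      have hne : (x, y) ≠ (y, x) := fun h => hxy (congrArg Prod.fst h)
      simp only [List.map_cons, List.count_cons, h1, h2]
      rcases hd with h | h <;> simp [h, hne, hne.symm, beq_iff_eq]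
    · push_neg at hd
      simp only [List.map_cons, List.count_cons]
      have e1 : (d.toProd == (x, y)) = false := by simp [beq_iff_eq]; exact hd.1
      have e2 : (d.toProd == (y, x)) = false := by simp [beq_iff_eq]; exact hd.2
      rw [e1, e2]
      simpa using ih hnd.2

lemma cnt_trail_le_one {a b : V} {W : G.Walk a b} (hT : W.IsTrail) (x y : V) :
    cnt G W x y + cnt G W y x ≤ 1 := by
  have := count_dart_aux G x y W.darts (by
    rw [← SimpleGraph.Walk.edges]; exact hT.edges_nodup)
  exact this

lemma cnt_dart {a b : V} {W : G.Walk a b} {x y : V} (h : cnt G W x y = 1) :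
    ∃ d ∈ W.darts, d.toProd = (x, y) := cnt_mem G (by omega)

/-- add `σ` units of flow along walk `W` -/
def aug (g : V → V → ℤ) {a b : V} (W : G.Walk a b) (σ : ℤ) : V → V → ℤ :=
  fun x y => g x y + σ * ((cnt G W x y : ℤ) - (cnt G W y x : ℤ))

lemma aug_skew {g : V → V → ℤ} (hg : ∀ a b, g a b = - g b a) {a b : V} (W : G.Walk a b)
    (σ : ℤ) : ∀ x y, aug G g W σ x y = - aug G g W σ y x := by
  intro x y; simp only [aug]; rw [hg x y]; ring

lemma out_aug {g : V → V → ℤ} {a b : V} (W : G.Walk a b) (σ : ℤ) (v : V) :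
    out (aug G g W σ) v = out g v + σ * ((if v = a then 1 else 0) - (if v = b then 1 else 0)) := by
  simp only [out, aug]
  rw [Finset.sum_add_distrib, ← Finset.mul_sum]
  congr 1
  rw [Finset.sum_sub_distrib, sum_cnt_fst_sub_snd]

structure IsPre (S T : Set V) (g : V → V → ℤ) : Prop where
  skew : ∀ a b, g a b = - g b a
  cap : ∀ a b, g a b ≤ if G.Adj a b then 1 else 0
  consI : ∀ v, v ∉ S → v ∉ T → out g v = 0
  consS : ∀ v, v ∈ S → 0 ≤ out g v

structure IsFlow (S T : Set V) (g : V → V → ℤ) extends IsPre G S T g : Prop where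
  consT : ∀ v, v ∈ T → out g v ≤ 0

lemma nonadj_eq_zero {g : V → V → ℤ} (hs : ∀ a b, g a b = - g b a)
    (hc : ∀ a b, g a b ≤ if G.Adj a b then 1 else 0) {a b : V} (h : ¬ G.Adj a b) :
    g a b = 0 := by
  have h1 := hc a b
  have h2 := hc b a
  rw [if_neg h] at h1
  rw [if_neg (fun hba => h hba.symm)] at h2
  rw [hs b a] at h2
  omega

lemma cnt_eq_zero_of_not_mem_edges {a b : V} {W : G.Walk a b} {x y : V}
    (h : s(x, y) ∉ W.edges) : cnt G W x y = 0 := by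
  by_contra hc
  obtain ⟨d, hd, hp⟩ := cnt_mem G hc
  apply h
  have : d.edge = s(x, y) := by rw [dart_edge_eq, hp]
  rw [← this]
  exact List.mem_map_of_mem hd

lemma mem_edges_dart {a b : V} {W : G.Walk a b} {e : Sym2 V} (h : e ∈ W.edges) :
    ∃ d ∈ W.darts, d.edge = e := by
  obtain ⟨d, hd, he⟩ := List.mem_map.1 h
  exact ⟨d, hd, he⟩

/-- capacity preservation for augmentation along a residual path -/
lemma aug_cap_pos {g : V → V → ℤ} (hs : ∀ a b, g a b = - g b a)
    (hc : ∀ a b, g a b ≤ if G.Adj a b then 1 else 0) {a b : V} {W : G.Walk a b}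
    (hT : W.IsTrail) (hres : ∀ d ∈ W.darts, g d.toProd.1 d.toProd.2 ≤ 0) :
    ∀ x y, aug G g W 1 x y ≤ if G.Adj x y then 1 else 0 := by
  intro x y
  have hle := cnt_trail_le_one G hT x y
  simp only [aug, one_mul]
  rcases Nat.eq_zero_or_pos (cnt G W x y) with h0 | hpos
  · rcases Nat.eq_zero_or_pos (cnt G W y x) with h0' | hpos'
    · rw [h0, h0']; simpa using hc x y
    · have h1 : cnt G W y x = 1 := by omega
      have := hc x y
      rw [h0, h1]
      push_cast
      split_ifs at this ⊢ <;> omega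
  · have h1 : cnt G W x y = 1 := by omega
    have h0' : cnt G W y x = 0 := by omega
    obtain ⟨d, hd, hp⟩ := cnt_dart G h1
    have hadj : G.Adj x y := by have := d.adj; rwa [hp] at this
    have hgle : g x y ≤ 0 := by have := hres d hd; rwa [hp] at this
    rw [h1, h0', if_pos hadj]
    push_cast
    try omega

/-- capacity preservation for subtracting a unit trail -/
lemma aug_cap_neg {g : V → V → ℤ} (hs : ∀ a b, g a b = - g b a)
    (hc : ∀ a b, g a b ≤ if G.Adj a b then 1 else 0) {a b : V} {W : G.Walk a b}
    (hT : W.IsTrail) (hres : ∀ d ∈ W.darts, g d.toProd.1 d.toProd.2 = 1) :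
    ∀ x y, aug G g W (-1) x y ≤ if G.Adj x y then 1 else 0 := by
  intro x y
  have hle := cnt_trail_le_one G hT x y
  simp only [aug]
  rcases Nat.eq_zero_or_pos (cnt G W x y) with h0 | hpos
  · rcases Nat.eq_zero_or_pos (cnt G W y x) with h0' | hpos'
    · rw [h0, h0']; simpa using hc x y
    · have h1 : cnt G W y x = 1 := by omega
      obtain ⟨d, hd, hp⟩ := cnt_dart G h1
      have hadj : G.Adj y x := by have := d.adj; rwa [hp] at this
      have hgeq : g y x = 1 := by have := hres d hd; rwa [hp] at this
      have : g x y = -1 := by rw [hs x y, hgeq]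
      rw [h0, h1, this, if_pos hadj.symm]
      push_cast
      try omega
  · have h1 : cnt G W x y = 1 := by omega
    have h0' : cnt G W y x = 0 := by omega
    obtain ⟨d, hd, hp⟩ := cnt_dart G h1
    have hadj : G.Adj x y := by have := d.adj; rwa [hp] at this
    have hgeq : g x y = 1 := by have := hres d hd; rwa [hp] at this
    rw [h1, h0', hgeq, if_pos hadj]
    push_cast
    try omega

/-- after subtracting a unit trail, the flow vanishes on the trail's edges -/
lemma aug_neg_zero_on_edges {g : V → V → ℤ} (hs : ∀ a b, g a b = - g b a)
    {a b : V} {W : G.Walk a b} (hT : W.IsTrail)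
    (hres : ∀ d ∈ W.darts, g d.toProd.1 d.toProd.2 = 1) {x y : V}
    (he : s(x, y) ∈ W.edges) : aug G g W (-1) x y = 0 := by
  obtain ⟨d, hd, hde⟩ := mem_edges_dart G he
  have hle := cnt_trail_le_one G hT x y
  rcases dart_eq_of_edge G d hde with hp | hp
  · have h1 : cnt G W x y ≠ 0 := by
      intro h0
      simp only [cnt] at h0
      rw [List.count_eq_zero] at h0
      exact h0 (List.mem_map.2 ⟨d, hd, hp⟩)
    have h1' : cnt G W x y = 1 := by omega
    have h0 : cnt G W y x = 0 := by omega
    have hgeq : g x y = 1 := by have := hres d hd; rwa [hp] at this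
    simp only [aug, h1', h0, hgeq]
    push_cast
    try ring
  · have h1 : cnt G W y x ≠ 0 := by
      intro h0
      simp only [cnt] at h0
      rw [List.count_eq_zero] at h0
      exact h0 (List.mem_map.2 ⟨d, hd, hp⟩)
    have h1' : cnt G W y x = 1 := by omega
    have h0 : cnt G W x y = 0 := by omega
    have hgeq : g y x = 1 := by have := hres d hd; rwa [hp] at this
    have hxy : g x y = -1 := by rw [hs x y, hgeq]
    simp only [aug, h1', h0, hxy]
    push_cast
    try ring

def supp (g : V → V → ℤ) : Finset (V × V) :=
  Finset.univ.filter (fun p : V × V => g p.1 p.2 = 1)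

lemma exists_pos_out {g : V → V → ℤ} {b : V} (h : 1 ≤ out g b)
    (hc : ∀ a b, g a b ≤ if G.Adj a b then 1 else 0) :
    ∃ c, g b c = 1 ∧ G.Adj b c := by
  have : (∑ u : V, (0:ℤ)) < ∑ u : V, g b u := by
    have h' : (0:ℤ) < out g b := by omega
    simpa [out] using h'
  obtain ⟨c, _, hc0⟩ := Finset.exists_lt_of_sum_lt this
  have h1 := hc b c
  have hadj : G.Adj b c := by
    by_contra hn
    rw [if_neg hn] at h1; omega
  rw [if_pos hadj] at h1
  exact ⟨c, by omega, hadj⟩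

lemma extract (T : Set V) :
    ∀ (n : ℕ) (g : V → V → ℤ), (∀ a b, g a b = - g b a) →
      (∀ a b, g a b ≤ if G.Adj a b then 1 else 0) →
      (∀ v, v ∉ T → 0 ≤ out g v) →
      ∀ b, b ∉ T → 1 ≤ out g b → (supp g).card ≤ n →
      ∃ t, t ∈ T ∧ ∃ W : G.Walk b t, W.IsTrail ∧
        ∀ d ∈ W.darts, g d.toProd.1 d.toProd.2 = 1 := by
  intro n
  induction n with
  | zero =>
    intro g hs hc hout b hbT hb hcard
    obtain ⟨c, hgc, _⟩ := exists_pos_out G hb hc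
    have : (b, c) ∈ supp g := by simp [supp, hgc]
    have := Finset.card_pos.2 ⟨_, this⟩
    omega
  | succ n ih =>
    intro g hs hc hout b hbT hb hcard
    obtain ⟨c, hgc, hadj⟩ := exists_pos_out G hb hc
    have hbc : b ≠ c := G.ne_of_adj hadj
    by_cases hcT : c ∈ T
    · refine ⟨c, hcT, SimpleGraph.Walk.cons hadj SimpleGraph.Walk.nil, ?_, ?_⟩
      · simp [SimpleGraph.Walk.isTrail_def]
      · intro d hd
        simp only [SimpleGraph.Walk.darts_cons, SimpleGraph.Walk.darts_nil,
          List.mem_singleton] at hd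
        subst hd
        exact hgc
    · -- remove edge (b,c) and recurse from c
      set g' : V → V → ℤ := fun x y =>
        if (x = b ∧ y = c) ∨ (x = c ∧ y = b) then 0 else g x y with hg'
      have hcb : g c b = -1 := by rw [hs c b, hgc]
      have hs' : ∀ x y, g' x y = - g' y x := by
        intro x y
        by_cases h1 : (x = b ∧ y = c) ∨ (x = c ∧ y = b)
        · have h2 : (y = b ∧ x = c) ∨ (y = c ∧ x = b) := by tauto
          simp only [hg', if_pos h1, if_pos h2]; ring
        · have h2 : ¬((y = b ∧ x = c) ∨ (y = c ∧ x = b)) := by tauto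
          simp only [hg', if_neg h1, if_neg h2]; exact hs x y
      have hc' : ∀ x y, g' x y ≤ if G.Adj x y then 1 else 0 := by
        intro x y
        have h2 := hc x y
        simp only [hg']
        by_cases h1 : (x = b ∧ y = c) ∨ (x = c ∧ y = b)
        · rw [if_pos h1]; split_ifs <;> norm_num
        · rw [if_neg h1]; exact h2
      have hg'z : ∀ x y, ((x = b ∧ y = c) ∨ (x = c ∧ y = b)) → g' x y = 0 := by
        intro x y h1; simp only [hg']; rw [if_pos h1]
      have hgeq' : ∀ x y, ¬((x = b ∧ y = c) ∨ (x = c ∧ y = b)) → g' x y = g x y := by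
        intro x y h1; simp only [hg']; rw [if_neg h1]
      have key : ∀ v u, g' v u = g v u - (if v = b then (if u = c then (1:ℤ) else 0) else 0)
          + (if v = c then (if u = b then (1:ℤ) else 0) else 0) := by
        intro v u
        by_cases h1 : v = b ∧ u = c
        · obtain ⟨rfl, rfl⟩ := h1
          rw [hg'z _ _ (Or.inl ⟨rfl, rfl⟩), hgc, if_pos rfl, if_pos rfl, if_neg hbc]
          norm_num
        · by_cases h2 : v = c ∧ u = b
          · obtain ⟨rfl, rfl⟩ := h2
            rw [hg'z _ _ (Or.inr ⟨rfl, rfl⟩), hcb, if_neg (Ne.symm hbc), if_pos rfl,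
              if_pos rfl]
            norm_num
          · rw [hgeq' _ _ (by tauto)]
            have e1 : (if v = b then (if u = c then (1:ℤ) else 0) else 0) = 0 := by
              split_ifs with a1 a2
              · exact absurd ⟨a1, a2⟩ h1
              · rfl
              · rfl
            have e2 : (if v = c then (if u = b then (1:ℤ) else 0) else 0) = 0 := by
              split_ifs with a1 a2
              · exact absurd ⟨a1, a2⟩ h2
              · rfl
              · rfl
            rw [e1, e2]
            ring
      have hogen : ∀ v, out g' v = out g v - (if v = b then 1 else 0)
          + (if v = c then 1 else 0) := by
        intro v
        simp only [out]
        simp_rw [key v]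
        rw [Finset.sum_add_distrib, Finset.sum_sub_distrib]
        have e1 : ∑ u : V, (if v = b then (if u = c then (1:ℤ) else 0) else 0)
            = if v = b then 1 else 0 := by
          by_cases h : v = b <;> simp [h]
        have e2 : ∑ u : V, (if v = c then (if u = b then (1:ℤ) else 0) else 0)
            = if v = c then 1 else 0 := by
          by_cases h : v = c <;> simp [h]
        rw [e1, e2]
      have hout' : ∀ v, v ∉ T → 0 ≤ out g' v := by
        intro v hv
        rw [hogen]
        by_cases h1 : v = b
        · subst h1
          rw [if_pos rfl, if_neg hbc]
          omega
        · rw [if_neg h1]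
          have := hout v hv
          split_ifs <;> omega
      have hc1' : 1 ≤ out g' c := by
        rw [hogen, if_neg (Ne.symm hbc), if_pos rfl]
        have := hout c hcT
        omega
      have hsub : supp g' ⊆ supp g := by
        intro p hp
        simp only [supp, Finset.mem_filter, Finset.mem_univ, true_and] at hp ⊢
        by_cases h1 : (p.1 = b ∧ p.2 = c) ∨ (p.1 = c ∧ p.2 = b)
        · rw [hg'z _ _ h1] at hp; norm_num at hp
        · rwa [hgeq' _ _ h1] at hp
      have hbcmem : (b, c) ∈ supp g := by simp [supp, hgc]
      have hbcnot : (b, c) ∉ supp g' := by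
        simp only [supp, Finset.mem_filter, Finset.mem_univ, true_and]
        rw [hg'z b c (Or.inl ⟨rfl, rfl⟩)]
        norm_num
      have hcard' : (supp g').card ≤ n := by
        have : (supp g').card < (supp g).card :=
          Finset.card_lt_card ⟨hsub, fun hall => hbcnot (hall hbcmem)⟩
        omega
      obtain ⟨t, htT, W', trail', hdarts'⟩ := ih g' hs' hc' hout' c hcT hc1' hcard'
      refine ⟨t, htT, SimpleGraph.Walk.cons hadj W', ?_, ?_⟩
      · rw [SimpleGraph.Walk.isTrail_def, SimpleGraph.Walk.edges_cons, List.nodup_cons]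
        refine ⟨?_, trail'.edges_nodup⟩
        intro hmem
        obtain ⟨d, hd, hde⟩ := mem_edges_dart G hmem
        have h1 := hdarts' d hd
        rcases dart_eq_of_edge G d hde with hp | hp <;> rw [hp] at h1
        · rw [hg'z b c (Or.inl ⟨rfl, rfl⟩)] at h1; norm_num at h1
        · rw [hg'z c b (Or.inr ⟨rfl, rfl⟩)] at h1; norm_num at h1
      · intro d hd
        rw [SimpleGraph.Walk.darts_cons, List.mem_cons] at hd
        rcases hd with rfl | hd
        · exact hgc
        · have h1 := hdarts' d hd
          by_cases h2 : (d.toProd.1 = b ∧ d.toProd.2 = c) ∨ (d.toProd.1 = c ∧ d.toProd.2 = b)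
          · rw [hg'z _ _ h2] at h1; norm_num at h1
          · rwa [hgeq' _ _ h2] at h1

lemma decomp (S T : Set V) (hdisj : Disjoint S T) :
    ∀ (k : ℕ) (g : V → V → ℤ), IsPre G S T g → (k : ℤ) ≤ value S g →
      ∃ p : Fin k → Σ a : V, Σ b : V, G.Walk a b,
        (∀ i, (p i).2.2.IsPath ∧ (p i).1 ∈ S ∧ (p i).2.1 ∈ T) ∧
        (∀ i i', i ≠ i' → ∀ e, e ∈ (p i).2.2.edges → e ∉ (p i').2.2.edges) ∧
        (∀ i, ∀ e ∈ (p i).2.2.edges, ∃ x y, e = s(x, y) ∧ g x y = 1) := by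
  intro k
  induction k with
  | zero =>
    intro g _ _
    exact ⟨Fin.elim0, fun i => i.elim0, fun i => i.elim0, fun i => i.elim0⟩
  | succ k ih =>
    intro g hg hval
    have hpos : ∃ s ∈ setFin S, 0 < out g s := by
      by_contra h
      push_neg at h
      have h2 : value S g ≤ 0 := Finset.sum_nonpos (fun v hv => h v hv)
      have : ((k:ℤ) + 1) ≤ value S g := by push_cast at hval ⊢; linarith
      linarith [Int.natCast_nonneg k]
    obtain ⟨s, hsF, hs1⟩ := hpos
    have hsS : s ∈ S := mem_setFin.1 hsF
    have hsT : s ∉ T := fun h => (Set.disjoint_left.1 hdisj) hsS h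
    have hout : ∀ v, v ∉ T → 0 ≤ out g v := by
      intro v hv
      by_cases hvS : v ∈ S
      · exact hg.consS v hvS
      · exact le_of_eq (hg.consI v hvS hv).symm
    obtain ⟨t, htT, W, trailW, hdarts⟩ :=
      extract G T (supp g).card g hg.skew hg.cap hout s hsT (by omega) le_rfl
    set g'' := aug G g W (-1) with hg''
    have hskew'' := aug_skew G hg.skew W (-1)
    have hcap'' := aug_cap_neg G hg.skew hg.cap trailW hdarts
    have hout'' : ∀ v, out g'' v
        = out g v - ((if v = s then 1 else 0) - (if v = t then 1 else 0)) := by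
      intro v; rw [hg'', out_aug]; ring
    have htS : t ∉ S := fun h => (Set.disjoint_left.1 hdisj) h htT
    have hpre'' : IsPre G S T g'' := by
      refine ⟨hskew'', hcap'', ?_, ?_⟩
      · intro v hvS hvT
        rw [hout'' v, hg.consI v hvS hvT, if_neg (fun h : v = s => hvS (h ▸ hsS)),
          if_neg (fun h : v = t => hvT (h ▸ htT))]
        ring
      · intro v hvS
        rw [hout'' v, if_neg (fun h : v = t => htS (h ▸ hvS))]
        by_cases h : v = s
        · subst h; rw [if_pos rfl]; omega
        · rw [if_neg h]; have := hg.consS v hvS; omega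
    have hval'' : (k : ℤ) ≤ value S g'' := by
      have hveq : value S g'' = value S g - 1 := by
        simp only [value]
        simp_rw [hout'']
        rw [Finset.sum_sub_distrib]
        have e0 : ∑ v ∈ setFin S, ((if v = s then (1:ℤ) else 0)
            - (if v = t then 1 else 0)) = 1 := by
          rw [Finset.sum_sub_distrib,
            Finset.sum_ite_eq' (setFin S) s (fun _ => (1:ℤ)),
            Finset.sum_ite_eq' (setFin S) t (fun _ => (1:ℤ)),
            if_pos hsF, if_neg (fun h => htS (mem_setFin.1 h))]
          ring
        rw [e0]
      rw [hveq]
      push_cast at hval ⊢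
      linarith
    obtain ⟨p', hp1', hp2', hp3'⟩ := ih g'' hpre'' hval''
    have hWedge : ∀ e ∈ W.edges, ∃ x y, e = s(x, y) ∧ g x y = 1 := by
      intro e he
      obtain ⟨d, hd, hde⟩ := mem_edges_dart G he
      exact ⟨d.toProd.1, d.toProd.2, by rw [← hde, dart_edge_eq], hdarts d hd⟩
    have hzero : ∀ e ∈ W.edges, ∀ x y, e = s(x, y) → g'' x y = 0 := by
      intro e he x y hexy
      rw [hg'']
      exact aug_neg_zero_on_edges G hg.skew trailW hdarts (hexy ▸ he)
    have hsupp'' : ∀ i, ∀ e ∈ (p' i).2.2.edges, e ∉ W.edges := by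
      intro i e he hmem
      obtain ⟨x, y, hexy, hx1⟩ := hp3' i e he
      rw [hzero e hmem x y hexy] at hx1
      norm_num at hx1
    refine ⟨Fin.cons (α := fun _ => Σ a : V, Σ b : V, G.Walk a b) ⟨s, t, W.bypass⟩ p', ?_, ?_, ?_⟩
    · intro i
      rcases Fin.eq_zero_or_eq_succ i with rfl | ⟨j, rfl⟩
      · simp only [Fin.cons_zero]
        exact ⟨SimpleGraph.Walk.bypass_isPath W, hsS, htT⟩
      · simp only [Fin.cons_succ, Fin.cases_succ]
        exact hp1' j
    · intro i i' hne e
      rcases Fin.eq_zero_or_eq_succ i with rfl | ⟨j, rfl⟩ <;>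
        rcases Fin.eq_zero_or_eq_succ i' with rfl | ⟨j', rfl⟩
      · exact absurd rfl hne
      · exact fun he hmem => hsupp'' j' e hmem (W.edges_bypass_subset he)
      · exact fun he hmem => hsupp'' j e he (W.edges_bypass_subset hmem)
      · exact fun he => hp2' j j' (fun h => hne (by rw [h])) e he
    · intro i
      rcases Fin.eq_zero_or_eq_succ i with rfl | ⟨j, rfl⟩
      · exact fun e he => hWedge e (W.edges_bypass_subset he)
      · intro e he
        obtain ⟨x, y, hexy, h1⟩ := hp3' j e he
        refine ⟨x, y, hexy, ?_⟩
        have hnmem : e ∉ W.edges := hsupp'' j e he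
        have c1 : cnt G W x y = 0 := cnt_eq_zero_of_not_mem_edges G (hexy ▸ hnmem)
        have c2 : cnt G W y x = 0 := by
          refine cnt_eq_zero_of_not_mem_edges G ?_
          rw [Sym2.eq_swap]
          exact hexy ▸ hnmem
        rw [hg'', aug, c1, c2] at h1
        push_cast at h1
        linarith

def res (g : V → V → ℤ) (a b : V) : Prop := G.Adj a b ∧ g a b ≤ 0

def Reach (S : Set V) (g : V → V → ℤ) (v : V) : Prop :=
  ∃ s ∈ S, Relation.ReflTransGen (res G g) s v

lemma rtg_chain {r : V → V → Prop} {a b : V} (h : Relation.ReflTransGen r a b) :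
    ∃ l : List V, List.Chain r a l ∧ (a :: l).getLast? = some b := by
  induction h using Relation.ReflTransGen.head_induction_on with
  | refl => exact ⟨[], List.Chain.nil, rfl⟩
  | head hac _ ih =>
    obtain ⟨l, hch, hlast⟩ := ih
    exact ⟨_ :: l, List.chain_cons.2 ⟨hac, hch⟩, by rw [List.getLast?_cons_cons]; exact hlast⟩

lemma chain_nodup {r : V → V → Prop} :
    ∀ (n : ℕ) (a : V) (l : List V), l.length ≤ n → List.Chain r a l →
      ∀ b, (a :: l).getLast? = some b →
      ∃ m : List V, List.Chain r a m ∧ (a :: m).getLast? = some b ∧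
        (a :: m).Nodup ∧ ∀ x ∈ m, x ∈ l := by
  intro n
  induction n with
  | zero =>
    intro a l hlen hch b hlast
    have : l = [] := List.eq_nil_of_length_eq_zero (by omega)
    subst this
    exact ⟨[], List.Chain.nil, hlast, by simp, by simp⟩
  | succ n ih =>
    intro a l hlen hch b hlast
    by_cases hmem : a ∈ l
    · obtain ⟨l₁, l₂, rfl⟩ := List.append_of_mem hmem
      have hch₂ : List.Chain r a l₂ := (List.isChain_cons_split.1 hch).2
      have hlast₂ : (a :: l₂).getLast? = some b := by
        rw [← hlast]
        have h1 : a :: (l₁ ++ a :: l₂) = (a :: l₁) ++ (a :: l₂) := by simp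
        rw [h1, List.getLast?_append]
        have h2 : (a :: l₂).getLast? ≠ none := by
          rw [List.getLast?_eq_getLast (List.cons_ne_nil _ _)]; simp
        cases h3 : (a :: l₂).getLast? with
        | none => exact absurd h3 h2
        | some x => simp [Option.or]
      have hlen₂ : l₂.length ≤ n := by
        have := hlen
        simp only [List.length_append, List.length_cons] at this
        omega
      obtain ⟨m, hm1, hm2, hm3, hm4⟩ := ih a l₂ hlen₂ hch₂ b hlast₂
      exact ⟨m, hm1, hm2, hm3, fun x hx => by simp [hm4 x hx]⟩
    · cases l with
      | nil => exact ⟨[], List.Chain.nil, hlast, by simp, by simp⟩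
      | cons c l' =>
        have hac : r a c := (List.chain_cons.1 hch).1
        have hch' : List.Chain r c l' := (List.chain_cons.1 hch).2
        have hlast' : (c :: l').getLast? = some b := by
          rw [← hlast, List.getLast?_cons_cons]
        have hlen' : l'.length ≤ n := by
          simp only [List.length_cons] at hlen; omega
        obtain ⟨m, hm1, hm2, hm3, hm4⟩ := ih c l' hlen' hch' b hlast'
        refine ⟨c :: m, List.chain_cons.2 ⟨hac, hm1⟩, ?_, ?_, ?_⟩
        · rw [List.getLast?_cons_cons]; exact hm2
        · rw [List.nodup_cons]
          refine ⟨?_, hm3⟩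
          intro hmem'
          apply hmem
          rcases List.mem_cons.1 hmem' with rfl | h
          · exact List.mem_cons_self
          · exact List.mem_cons.2 (Or.inr (hm4 _ h))
        · intro x hx
          rcases List.mem_cons.1 hx with rfl | h
          · exact List.mem_cons_self
          · exact List.mem_cons.2 (Or.inr (hm4 _ h))

lemma chain_walk {g : V → V → ℤ} :
    ∀ (l : List V) (a : V), List.Chain (res G g) a l →
      ∃ W : G.Walk a ((a :: l).getLast (List.cons_ne_nil _ _)),
        W.support = a :: l ∧ ∀ d ∈ W.darts, g d.toProd.1 d.toProd.2 ≤ 0 := by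
  intro l
  induction l with
  | nil =>
    intro a _
    exact ⟨SimpleGraph.Walk.nil, by simp, by simp⟩
  | cons c l' ih =>
    intro a hch
    obtain ⟨hac, hch'⟩ := List.chain_cons.1 hch
    obtain ⟨W', hsup', hres'⟩ := ih c hch'
    have hac1 : G.Adj a c := hac.1
    refine ⟨SimpleGraph.Walk.cons hac1 W', ?_, ?_⟩
    · exact congrArg (List.cons a) hsup'
    · intro d hd
      change d ∈ (⟨(a, c), hac1⟩ : G.Dart) :: W'.darts at hd
      rw [List.mem_cons] at hd
      rcases hd with rfl | hd
      · exact hac.2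
      · exact hres' d hd

lemma reach_to_path {g : V → V → ℤ} {s t : V} (h : Relation.ReflTransGen (res G g) s t) :
    ∃ W : G.Walk s t, W.IsPath ∧ ∀ d ∈ W.darts, g d.toProd.1 d.toProd.2 ≤ 0 := by
  obtain ⟨l, hch, hlast⟩ := rtg_chain h
  obtain ⟨m, hm1, hm2, hm3, _⟩ := chain_nodup l.length s l le_rfl hch t hlast
  obtain ⟨W0, hsup, hres⟩ := chain_walk G m s hm1
  have hend : (s :: m).getLast (List.cons_ne_nil _ _) = t := by
    have h2 := List.getLast?_eq_getLast (l := s :: m) (List.cons_ne_nil _ _)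
    rw [hm2] at h2
    exact (Option.some_injective _ h2.symm)
  refine ⟨W0.copy rfl hend, ?_, ?_⟩
  · rw [SimpleGraph.Walk.isPath_def, SimpleGraph.Walk.support_copy, hsup]
    exact hm3
  · intro d hd
    rw [SimpleGraph.Walk.darts_copy] at hd
    exact hres d hd

lemma augment (S T : Set V) (hdisj : Disjoint S T) {g : V → V → ℤ} (hg : IsFlow G S T g)
    {s t : V} (hsS : s ∈ S) (htT : t ∈ T) {W : G.Walk s t} (hP : W.IsPath)
    (hres : ∀ d ∈ W.darts, g d.toProd.1 d.toProd.2 ≤ 0) :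
    IsFlow G S T (aug G g W 1) ∧ value S (aug G g W 1) = value S g + 1 := by
  have hsT : s ∉ T := fun h => (Set.disjoint_left.1 hdisj) hsS h
  have htS : t ∉ S := fun h => (Set.disjoint_left.1 hdisj) h htT
  have hout' : ∀ v, out (aug G g W 1) v
      = out g v + ((if v = s then 1 else 0) - (if v = t then 1 else 0)) := by
    intro v; rw [out_aug]; ring
  constructor
  · refine ⟨⟨aug_skew G hg.skew W 1, aug_cap_pos G hg.skew hg.cap hP.isTrail hres, ?_, ?_⟩, ?_⟩
    · intro v hvS hvT
      rw [hout' v, hg.consI v hvS hvT, if_neg (fun h : v = s => hvS (h ▸ hsS)),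
        if_neg (fun h : v = t => hvT (h ▸ htT))]
      ring
    · intro v hvS
      rw [hout' v, if_neg (fun h : v = t => htS (h ▸ hvS))]
      have := hg.consS v hvS
      split_ifs <;> omega
    · intro v hvT
      rw [hout' v, if_neg (fun h : v = s => hsT (h ▸ hvT))]
      have := hg.consT v hvT
      split_ifs <;> omega
  · simp only [value]
    simp_rw [hout']
    rw [Finset.sum_add_distrib, Finset.sum_sub_distrib,
      Finset.sum_ite_eq' (setFin S) s (fun _ => (1:ℤ)),
      Finset.sum_ite_eq' (setFin S) t (fun _ => (1:ℤ)),
      if_pos (mem_setFin.2 hsS), if_neg (fun h => htS (mem_setFin.1 h))]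
    ring

lemma valBound {g : V → V → ℤ} (hc : ∀ a b, g a b ≤ if G.Adj a b then 1 else 0)
    (S : Set V) : value S g ≤ (Fintype.card V : ℤ) * (Fintype.card V) := by
  have h1 : ∀ v, out g v ≤ (Fintype.card V : ℤ) := by
    intro v
    calc out g v ≤ ∑ _u : V, (1:ℤ) :=
          Finset.sum_le_sum (fun u _ => le_trans (hc v u) (by split_ifs <;> norm_num))
    _ = (Fintype.card V : ℤ) := by simp
  calc value S g ≤ ∑ _v ∈ setFin S, (Fintype.card V : ℤ) :=
        Finset.sum_le_sum (fun v _ => h1 v)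
  _ = (setFin S).card * (Fintype.card V : ℤ) := by rw [Finset.sum_const]; ring
  _ ≤ (Fintype.card V : ℤ) * (Fintype.card V) := by
      have := Finset.card_le_univ (setFin S)
      have h2 : ((setFin S).card : ℤ) ≤ (Fintype.card V : ℤ) := by
        exact_mod_cast le_trans this (le_of_eq (Finset.card_univ))
      have h3 : (0:ℤ) ≤ (Fintype.card V : ℤ) := by positivity
      exact mul_le_mul_of_nonneg_right h2 h3

lemma exists_noaug (S T : Set V) (hdisj : Disjoint S T) :
    ∃ g, IsFlow G S T g ∧ ∀ t ∈ T, ¬ Reach G S g t := by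
  have main : ∀ (n : ℕ) (g), IsFlow G S T g →
      (Fintype.card V : ℤ) * (Fintype.card V) ≤ value S g + n →
      ∃ g', IsFlow G S T g' ∧ ∀ t ∈ T, ¬ Reach G S g' t := by
    intro n
    induction n with
    | zero =>
      intro g hg hbound
      by_cases hre : ∃ t ∈ T, Reach G S g t
      · exfalso
        obtain ⟨t, htT, s, hsS, hrtg⟩ := hre
        obtain ⟨W, hP, hres⟩ := reach_to_path G hrtg
        obtain ⟨hflow', hval'⟩ := augment G S T hdisj hg hsS htT hP hres
        have := valBound G hflow'.cap S
        have := valBound G hg.cap S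
        push_cast at hbound
        omega
      · push_neg at hre
        exact ⟨g, hg, hre⟩
    | succ n ih =>
      intro g hg hbound
      by_cases hre : ∃ t ∈ T, Reach G S g t
      · obtain ⟨t, htT, s, hsS, hrtg⟩ := hre
        obtain ⟨W, hP, hres⟩ := reach_to_path G hrtg
        obtain ⟨hflow', hval'⟩ := augment G S T hdisj hg hsS htT hP hres
        refine ih _ hflow' ?_
        rw [hval']
        push_cast at hbound ⊢
        omega
      · push_neg at hre
        exact ⟨g, hg, hre⟩
  have hzero : IsFlow G S T (fun _ _ => 0) := by
    refine ⟨⟨fun a b => by ring, fun a b => by split_ifs <;> norm_num, ?_, ?_⟩, ?_⟩ <;>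
      simp [out]
  have hval0 : value S (fun _ _ => 0) = 0 := by simp [value, out]
  refine main (Fintype.card V * Fintype.card V) _ hzero ?_
  rw [hval0]
  push_cast
  omega

lemma cut_of_noaug (S T : Set V) {g : V → V → ℤ} (hg : IsFlow G S T g)
    (hno : ∀ t ∈ T, ¬ Reach G S g t) :
    ∃ C : Finset (Sym2 V),
      (∃ f : V → Bool, (∀ s ∈ S, f s = false) ∧ (∀ t ∈ T, f t = true) ∧
        ∀ e, e ∈ C ↔ e ∈ G.edgeSet ∧ ∃ a b, e = s(a, b) ∧ f a ≠ f b) ∧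
      (C.card : ℤ) = value S g := by
  classical
  set R : Set V := {v | Reach G S g v} with hR
  set f : V → Bool := fun v => if v ∈ R then false else true with hf
  set C : Finset (Sym2 V) :=
    Finset.univ.filter (fun e => e ∈ G.edgeSet ∧ ∃ a b, e = s(a, b) ∧ f a ≠ f b) with hC
  have hfS : ∀ s ∈ S, f s = false := by
    intro s hs
    simp only [hf, if_pos (show s ∈ R from ⟨s, hs, Relation.ReflTransGen.refl⟩)]
  have hfT : ∀ t ∈ T, f t = true := by
    intro t ht
    have hnt : t ∉ R := by rw [hR]; exact hno t ht
    simp only [hf, if_neg hnt]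
  have hCmem : ∀ e, e ∈ C ↔ e ∈ G.edgeSet ∧ ∃ a b, e = s(a, b) ∧ f a ≠ f b := by
    intro e
    simp [hC]
  have hfR : ∀ v, f v = false ↔ v ∈ R := by
    intro v
    simp only [hf]
    split_ifs with h <;> simp [h]
  -- the flow value equals the number of cut edges
  set Rfin : Finset V := Finset.univ.filter (· ∈ R) with hRfin
  have hmemR : ∀ v, v ∈ Rfin ↔ v ∈ R := by intro v; simp [hRfin]
  have hcross : ∀ v ∈ Rfin, ∀ u ∈ Rfinᶜ, g v u = if G.Adj v u then 1 else 0 := by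
    intro v hv u hu
    rw [Finset.mem_compl] at hu
    by_cases hadj : G.Adj v u
    · rw [if_pos hadj]
      have hvu : ¬ (g v u ≤ 0) := by
        intro hle
        apply hu
        rw [hmemR]
        obtain ⟨s, hs, hrtg⟩ := (hmemR v).1 hv
        exact ⟨s, hs, hrtg.tail ⟨hadj, hle⟩⟩
      have := hg.cap v u
      rw [if_pos hadj] at this
      omega
    · rw [if_neg hadj]
      exact nonadj_eq_zero G hg.skew hg.cap hadj
  have hstep1 : value S g = ∑ v ∈ Rfin, out g v := by
    have hsub : setFin S ⊆ Rfin := by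
      intro v hv
      rw [hmemR]
      exact ⟨v, mem_setFin.1 hv, Relation.ReflTransGen.refl⟩
    refine Finset.sum_subset hsub ?_
    intro v hv hnv
    have hvT : v ∉ T := by
      intro hvT
      exact hno v hvT ((hmemR v).1 hv)
    exact hg.consI v (fun h => hnv (mem_setFin.2 h)) hvT
  have hstep2 : ∑ v ∈ Rfin, out g v = ∑ v ∈ Rfin, ∑ u ∈ Rfinᶜ, g v u := by
    have hsplit : ∀ v, out g v = ∑ u ∈ Rfin, g v u + ∑ u ∈ Rfinᶜ, g v u := by
      intro v
      rw [out, ← Finset.sum_add_sum_compl Rfin (g v)]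
    simp_rw [hsplit]
    rw [Finset.sum_add_distrib]
    have hzero : ∑ v ∈ Rfin, ∑ u ∈ Rfin, g v u = 0 := by
      have h1 : ∑ v ∈ Rfin, ∑ u ∈ Rfin, g v u = ∑ v ∈ Rfin, ∑ u ∈ Rfin, g u v :=
        Finset.sum_comm
      have h2 : ∑ v ∈ Rfin, ∑ u ∈ Rfin, g u v
          = - ∑ v ∈ Rfin, ∑ u ∈ Rfin, g v u := by
        rw [← Finset.sum_neg_distrib]
        refine Finset.sum_congr rfl (fun v _ => ?_)
        rw [← Finset.sum_neg_distrib]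
        exact Finset.sum_congr rfl (fun u _ => by rw [hg.skew u v])
      have := h1.trans h2
      linarith
    rw [hzero, zero_add]
  have hstep3 : ∑ v ∈ Rfin, ∑ u ∈ Rfinᶜ, g v u
      = ∑ v ∈ Rfin, ∑ u ∈ Rfinᶜ, (if G.Adj v u then (1:ℤ) else 0) := by
    refine Finset.sum_congr rfl (fun v hv => Finset.sum_congr rfl (fun u hu => ?_))
    exact hcross v hv u hu
  set P : Finset (V × V) := (Rfin ×ˢ Rfinᶜ).filter (fun p => G.Adj p.1 p.2) with hP
  have hstep4 : ∑ v ∈ Rfin, ∑ u ∈ Rfinᶜ, (if G.Adj v u then (1:ℤ) else 0)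
      = (P.card : ℤ) := by
    rw [← Finset.sum_product' Rfin Rfinᶜ (fun v u => if G.Adj v u then (1:ℤ) else 0)]
    rw [hP]
    exact Finset.sum_boole _ _
  have hPC : P.card = C.card := by
    refine Finset.card_bij (fun p _ => s(p.1, p.2)) ?_ ?_ ?_
    · intro p hp
      rw [hP, Finset.mem_filter, Finset.mem_product] at hp
      obtain ⟨⟨hp1, hp2⟩, hadj⟩ := hp
      rw [hCmem]
      refine ⟨hadj, p.1, p.2, rfl, ?_⟩
      have h1 : f p.1 = false := (hfR p.1).2 ((hmemR p.1).1 hp1)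
      have h2 : f p.2 = true := by
        rw [Finset.mem_compl] at hp2
        have : ¬ (f p.2 = false) := fun h => (hp2 ((hmemR p.2).2 ((hfR p.2).1 h)))
        cases hfp : f p.2
        · exact absurd hfp this
        · rfl
      rw [h1, h2]
      simp
    · intro p hp q hq heq
      rw [hP, Finset.mem_filter, Finset.mem_product] at hp hq
      obtain ⟨⟨hp1, hp2⟩, _⟩ := hp
      obtain ⟨⟨hq1, hq2⟩, _⟩ := hq
      rw [Finset.mem_compl] at hp2 hq2
      rcases Sym2.eq_iff.1 heq with ⟨h1, h2⟩ | ⟨h1, h2⟩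
      · exact Prod.ext h1 h2
      · exfalso
        apply hq2
        rw [← h1]
        exact hp1
    · intro e he
      rw [hCmem] at he
      obtain ⟨hedge, a, b, rfl, hfab⟩ := he
      have hadj : G.Adj a b := (SimpleGraph.mem_edgeSet G).1 hedge
      by_cases haR : a ∈ R
      · have hbR : b ∉ R := by
          intro hbR
          apply hfab
          rw [(hfR a).2 haR, (hfR b).2 hbR]
        refine ⟨(a, b), ?_, rfl⟩
        rw [hP, Finset.mem_filter, Finset.mem_product]
        exact ⟨⟨(hmemR a).2 haR, Finset.mem_compl.2 (fun h => hbR ((hmemR b).1 h))⟩, hadj⟩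
      · have hbR : b ∈ R := by
          by_contra hbR
          apply hfab
          have h1 : f a = true := by
            cases hfa : f a
            · exact absurd ((hfR a).1 hfa) haR
            · rfl
          have h2 : f b = true := by
            cases hfb : f b
            · exact absurd ((hfR b).1 hfb) hbR
            · rfl
          rw [h1, h2]
        refine ⟨(b, a), ?_, Sym2.eq_swap⟩
        rw [hP, Finset.mem_filter, Finset.mem_product]
        exact ⟨⟨(hmemR b).2 hbR, Finset.mem_compl.2 (fun h => haR ((hmemR a).1 h))⟩, hadj.symm⟩
  refine ⟨C, ⟨f, hfS, hfT, hCmem⟩, ?_⟩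
  rw [hstep1, hstep2, hstep3, hstep4, hPC]

lemma cross_walk {f : V → Bool} : ∀ {a b : V} (W : G.Walk a b), f a ≠ f b →
    ∃ e ∈ W.edges, ∃ x y, e = s(x, y) ∧ f x ≠ f y := by
  intro a b W
  induction W with
  | nil => intro h; exact absurd rfl h
  | @cons u v w h W ih =>
    intro hne
    by_cases hfc : f u = f v
    · obtain ⟨e, he, hx⟩ := ih (fun hh => hne (hfc.trans hh))
      exact ⟨e, by rw [SimpleGraph.Walk.edges_cons]; exact List.mem_cons.2 (Or.inr he), hx⟩
    · exact ⟨s(u, v), by rw [SimpleGraph.Walk.edges_cons]; exact List.mem_cons_self,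
        u, v, rfl, hfc⟩

lemma easy (S T : Set V) (C : Finset (Sym2 V)) (f : V → Bool)
    (hfS : ∀ s ∈ S, f s = false) (hfT : ∀ t ∈ T, f t = true)
    (hC : ∀ e, e ∈ C ↔ e ∈ G.edgeSet ∧ ∃ a b, e = s(a, b) ∧ f a ≠ f b)
    {m : ℕ} (p : Fin m → Σ a : V, Σ b : V, G.Walk a b)
    (h1 : ∀ i, (p i).2.2.IsPath ∧ (p i).1 ∈ S ∧ (p i).2.1 ∈ T)
    (h2 : ∀ i i', i ≠ i' → ∀ e, e ∈ (p i).2.2.edges → e ∉ (p i').2.2.edges) :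
    m ≤ C.card := by
  have hex : ∀ i, ∃ e, e ∈ (p i).2.2.edges ∧ e ∈ C := by
    intro i
    obtain ⟨hP, hS, hT⟩ := h1 i
    have hne : f (p i).1 ≠ f (p i).2.1 := by rw [hfS _ hS, hfT _ hT]; simp
    obtain ⟨e, he, x, y, hxy, hfxy⟩ := cross_walk G (p i).2.2 hne
    refine ⟨e, he, (hC e).2 ⟨?_, x, y, hxy, hfxy⟩⟩
    exact (p i).2.2.edges_subset_edgeSet he
  choose φ hφ1 hφ2 using hex
  have hcard : (Finset.univ : Finset (Fin m)).card ≤ C.card := by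
    apply Finset.card_le_card_of_injOn φ (fun i _ => hφ2 i)
    intro i _ j _ hij
    by_contra hne
    exact h2 i j hne (φ i) (hφ1 i) (hij ▸ hφ1 j)
  simpa using hcard

end Menger18

/-- Undirected Menger's theorem: in a finite undirected graph whose degree-1 vertices are
partitioned into sources `S` and sinks `T`, the maximum number of pairwise edge-disjoint
paths from `S` to `T` equals the minimum cardinality of an edge cut set separating `S`
from `T`. -/
theorem stmt_18 {V : Type*} [Fintype V] [DecidableEq V] (G : SimpleGraph V)
    [DecidableRel G.Adj] (S T : Set V) (hdisj : Disjoint S T)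
    (hdeg1 : ∀ v ∈ S ∪ T, G.degree v = 1) :
    sSup {m : ℕ | ∃ p : Fin m → Σ a : V, Σ b : V, G.Walk a b,
        (∀ i, (p i).2.2.IsPath ∧ (p i).1 ∈ S ∧ (p i).2.1 ∈ T) ∧
        (∀ i i', i ≠ i' → ∀ e, e ∈ (p i).2.2.edges → e ∉ (p i').2.2.edges)} =
      sInf {m : ℕ | ∃ C : Finset (Sym2 V),
        (∃ f : V → Bool, (∀ s ∈ S, f s = false) ∧ (∀ t ∈ T, f t = true) ∧
          ∀ e, e ∈ C ↔ e ∈ G.edgeSet ∧ ∃ a b, e = s(a, b) ∧ f a ≠ f b) ∧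
        m = C.card} := by
  classical
  obtain ⟨g, hflow, hno⟩ := Menger18.exists_noaug G S T hdisj
  obtain ⟨C₀, ⟨f₀, hf1, hf2, hf3⟩, hCval⟩ := Menger18.cut_of_noaug G S T hflow hno
  have hCS : C₀.card ∈ {m : ℕ | ∃ C : Finset (Sym2 V),
      (∃ f : V → Bool, (∀ s ∈ S, f s = false) ∧ (∀ t ∈ T, f t = true) ∧
        ∀ e, e ∈ C ↔ e ∈ G.edgeSet ∧ ∃ a b, e = s(a, b) ∧ f a ≠ f b) ∧
      m = C.card} := ⟨C₀, ⟨f₀, hf1, hf2, hf3⟩, rfl⟩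
  have hk : ((C₀.card : ℕ) : ℤ) ≤ Menger18.value S g := le_of_eq hCval
  obtain ⟨p₀, hp01, hp02, _⟩ :=
    Menger18.decomp G S T hdisj C₀.card g hflow.toIsPre hk
  have hPSmem : C₀.card ∈ {m : ℕ | ∃ p : Fin m → Σ a : V, Σ b : V, G.Walk a b,
      (∀ i, (p i).2.2.IsPath ∧ (p i).1 ∈ S ∧ (p i).2.1 ∈ T) ∧
      (∀ i i', i ≠ i' → ∀ e, e ∈ (p i).2.2.edges → e ∉ (p i').2.2.edges)} :=
    ⟨p₀, hp01, hp02⟩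
  have hub : ∀ m ∈ {m : ℕ | ∃ p : Fin m → Σ a : V, Σ b : V, G.Walk a b,
      (∀ i, (p i).2.2.IsPath ∧ (p i).1 ∈ S ∧ (p i).2.1 ∈ T) ∧
      (∀ i i', i ≠ i' → ∀ e, e ∈ (p i).2.2.edges → e ∉ (p i').2.2.edges)},
      m ≤ C₀.card := by
    rintro m ⟨p, h1, h2⟩
    exact Menger18.easy G S T C₀ f₀ hf1 hf2 hf3 p h1 h2
  have h0mem : (0:ℕ) ∈ {m : ℕ | ∃ p : Fin m → Σ a : V, Σ b : V, G.Walk a b,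
      (∀ i, (p i).2.2.IsPath ∧ (p i).1 ∈ S ∧ (p i).2.1 ∈ T) ∧
      (∀ i i', i ≠ i' → ∀ e, e ∈ (p i).2.2.edges → e ∉ (p i').2.2.edges)} :=
    ⟨Fin.elim0, fun i => i.elim0, fun i => i.elim0⟩
  apply le_antisymm
  · obtain ⟨C', ⟨f', hf1', hf2', hf3'⟩, hCeq⟩ := Nat.sInf_mem (⟨_, hCS⟩ : Set.Nonempty _)
    apply csSup_le ⟨0, h0mem⟩
    rintro m ⟨p, h1, h2⟩
    rw [hCeq]
    exact Menger18.easy G S T C' f' hf1' hf2' hf3' p h1 h2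
  · calc sInf _ ≤ C₀.card := Nat.sInf_le hCS
    _ ≤ sSup _ := le_csSup ⟨C₀.card, fun m hm => hub m hm⟩ hPSmem
end

section
/- Fix a finite graph G with capacity function c and local ordering L, in the 'Version II' setting where all vertices of the same valence type must receive the same tensor. If 𝒯⁰ = {𝒯⁰_B} is a family of tensors indexed by valence types whose entries are algebraically independent over ℚ, then the tensor assignment v ↦ 𝒯⁰_{B_v} realizes the maximum rank: rank β(G,c,L;𝒯⁰) = QMF(G,c,L). -/
open scoped Classical

/-- A tensor-network template: a finite undirected graph with edge set `E`, internal
vertices `V`, input open ends `S`, output open ends `T`, and a capacity on each edge.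
Each edge has two ends (`ends e 0` and `ends e 1`), each attached either to an internal
vertex or to an open end; each open end is the end of exactly one edge. -/
structure TN where
  V : Type
  E : Type
  S : Type
  T : Type
  fV : Fintype V
  dV : DecidableEq V
  fE : Fintype E
  dE : DecidableEq E
  fS : Fintype S
  dS : DecidableEq S
  fT : Fintype T
  dT : DecidableEq T
  /-- The capacity (local Hilbert space dimension) of each edge. -/
  c : E → ℕ
  c_pos : ∀ e, 0 < c e
  /-- The two ends of each edge attach to internal vertices or open ends. -/
  ends : E → Fin 2 → V ⊕ S ⊕ T
  /-- Each input open end is the end of exactly one edge. -/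
  openS : ∀ u : S, ∃! p : E × Fin 2, ends p.1 p.2 = Sum.inr (Sum.inl u)
  /-- Each output open end is the end of exactly one edge. -/
  openT : ∀ u : T, ∃! p : E × Fin 2, ends p.1 p.2 = Sum.inr (Sum.inr u)

attribute [instance] TN.fV TN.dV TN.fE TN.dE TN.fS TN.dS TN.fT TN.dT

namespace TN

variable (N : TN)

/-- The edge-ends incident to an internal vertex `v`. -/
def Legs (v : N.V) : Type := {p : N.E × Fin 2 // N.ends p.1 p.2 = Sum.inl v}

noncomputable instance (v : N.V) : Fintype (N.Legs v) := by unfold Legs; infer_instance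

/-- A tensor assignment: a tensor at each internal vertex, i.e. a complex number for each
choice of an index on each incident edge-end. -/
def Assignment : Type :=
  (v : N.V) → (((p : N.Legs v) → Fin (N.c p.1.1)) → ℂ)

noncomputable instance : TopologicalSpace N.Assignment := by unfold Assignment; infer_instance

/-- The edge whose open end is the input `u`. -/
noncomputable def inEdge (u : N.S) : N.E := (N.openS u).choose.1

/-- The edge whose open end is the output `u`. -/
noncomputable def outEdge (u : N.T) : N.E := (N.openT u).choose.1

/-- Multi-indices on the input edges; a basis of the input space `V_S`. -/
def InIdx : Type := (u : N.S) → Fin (N.c (N.inEdge u))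

/-- Multi-indices on the output edges; a basis of the output space `V_T`. -/
def OutIdx : Type := (u : N.T) → Fin (N.c (N.outEdge u))

noncomputable instance : Fintype N.InIdx := by unfold InIdx; infer_instance
noncomputable instance : Fintype N.OutIdx := by unfold OutIdx; infer_instance
noncomputable instance : DecidableEq N.InIdx := by unfold InIdx; infer_instance
noncomputable instance : DecidableEq N.OutIdx := by unfold OutIdx; infer_instance

/-- The matrix of the linear map `β(G,c;𝒯) : V_S → V_T` obtained by contracting all
internal edges of the tensor network. -/
noncomputable def β (𝒯 : N.Assignment) : Matrix N.OutIdx N.InIdx ℂ :=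
  fun iT iS => ∑ W : (e : N.E) → Fin (N.c e),
    if (∀ u : N.S, W (N.inEdge u) = iS u) ∧ (∀ u : N.T, W (N.outEdge u) = iT u) then
      ∏ v : N.V, 𝒯 v (fun p => W p.1.1)
    else 0

/-- The quantum max-flow: the maximal rank of the contracted linear map over all
tensor assignments. -/
noncomputable def QMF : ℕ := sSup {r : ℕ | ∃ 𝒯 : N.Assignment, (N.β 𝒯).rank = r}

/-- `C` is an edge cut set: for some partition of vertices and open ends into an `S`-side
and a `T`-side, `C` is exactly the set of edges crossing the partition. -/
def IsCutSet (C : Finset N.E) : Prop :=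
  ∃ f : N.V ⊕ N.S ⊕ N.T → Bool,
    (∀ u : N.S, f (Sum.inr (Sum.inl u)) = false) ∧
    (∀ u : N.T, f (Sum.inr (Sum.inr u)) = true) ∧
    (∀ e : N.E, e ∈ C ↔ f (N.ends e 0) ≠ f (N.ends e 1))

/-- The quantum min-cut: the minimum over edge cut sets of the product of capacities. -/
noncomputable def QMC : ℕ :=
  sInf {m : ℕ | ∃ C : Finset N.E, N.IsCutSet C ∧ m = ∏ e ∈ C, N.c e}

end TN

namespace TN

/-- A local ordering: for each internal vertex, a linear ordering of its incident
edge-ends. -/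
def LocalOrdering (N : TN) : Type :=
  (v : N.V) → (Fin (Fintype.card (N.Legs v)) ≃ N.Legs v)

/-- The valence type of a vertex: its degree together with the sequence of capacities of
its incident edge-ends, listed in the local order. -/
noncomputable def valenceType (N : TN) (L : N.LocalOrdering) (v : N.V) :
    Σ d : ℕ, Fin d → ℕ :=
  ⟨Fintype.card (N.Legs v), fun i => N.c ((L v i).1.1)⟩

/-- A Version II tensor family: one tensor for each valence type. -/
def AssignmentII : Type :=
  (B : Σ d : ℕ, Fin d → ℕ) → ((i : Fin B.1) → Fin (B.2 i)) → ℂ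

/-- The matrix of the contracted linear map `β(G,c,L;𝒯)` in Version II, where each
vertex `v` is assigned the tensor `𝒯 (valenceType v)` according to the local ordering. -/
noncomputable def βII (N : TN) (L : N.LocalOrdering) (𝒯 : AssignmentII) :
    Matrix N.OutIdx N.InIdx ℂ :=
  fun iT iS => ∑ W : (e : N.E) → Fin (N.c e),
    if (∀ u : N.S, W (N.inEdge u) = iS u) ∧ (∀ u : N.T, W (N.outEdge u) = iT u) then
      ∏ v : N.V, 𝒯 (N.valenceType L v) (fun i => W ((L v i).1.1))
    else 0

/-- The Version II quantum max-flow: the maximal rank of `β(G,c,L;𝒯)` over all Version II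
tensor families. -/
noncomputable def QMFII (N : TN) (L : N.LocalOrdering) : ℕ :=
  sSup {r : ℕ | ∃ 𝒯 : AssignmentII, (N.βII L 𝒯).rank = r}

end TN

section AuxRank

open Matrix Module Submodule

variable {K : Type*} [Field K] {m n : Type} [Fintype m] [DecidableEq m] [Fintype n] [DecidableEq n]

lemma aux_exists_indep {ι : Type*} (w : ι → (n → K)) (r : ℕ)
    (hr : finrank K (span K (Set.range w)) = r) :
    ∃ g : Fin r → ι, LinearIndependent K (w ∘ g) := by
  obtain ⟨s, hsub, hspan, hli⟩ := exists_linearIndependent K (Set.range w)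
  have hfin : s.Finite := hli.finite
  haveI := hfin.fintype
  have hcard : Fintype.card s = r := by
    rw [← hr, ← hspan, finrank_span_set_eq_card hli, Set.toFinset_card]
  let e : Fin r ≃ s := (Fintype.equivFinOfCardEq hcard).symm
  choose g hg using fun i : Fin r => hsub (e i).2
  refine ⟨g, ?_⟩
  have hwg : w ∘ g = (fun x : s => (x : n → K)) ∘ e := funext fun i => hg i
  rw [hwg]
  exact hli.comp e e.injective

lemma aux_rank_minor (M : Matrix m n K) :
    ∃ f : Fin M.rank → m, ∃ g : Fin M.rank → n, (M.submatrix f g).det ≠ 0 := by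
  obtain ⟨g, hg⟩ := aux_exists_indep Mᵀ M.rank M.rank_eq_finrank_span_cols.symm
  set B : Matrix m (Fin M.rank) K := M.submatrix id g with hB
  have hBt : LinearIndependent K Bᵀ := hg
  have hBrank : B.rank = M.rank := by
    have h1 : Bᵀ.rank = Fintype.card (Fin M.rank) := hBt.rank_matrix
    rw [B.rank_transpose, Fintype.card_fin] at h1
    exact h1
  have hrows : finrank K (span K (Set.range (fun i : m => B i))) = M.rank := by
    have h2 : Bᵀ.rank = finrank K (span K (Set.range Bᵀᵀ)) := Bᵀ.rank_eq_finrank_span_cols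
    rw [B.rank_transpose, hBrank, transpose_transpose] at h2
    exact h2.symm
  obtain ⟨f, hf⟩ := aux_exists_indep (fun i : m => B i) M.rank hrows
  refine ⟨f, g, ?_⟩
  have hsub : M.submatrix f g = B.submatrix f id := rfl
  have hli : LinearIndependent K (fun i => (M.submatrix f g) i) := hf
  have hunit : IsUnit (M.submatrix f g) := linearIndependent_rows_iff_isUnit.mp hli
  have := (isUnit_iff_isUnit_det _).mp hunit
  exact IsUnit.ne_zero this

lemma aux_minor_rank (M : Matrix m n K) {r : ℕ} (f : Fin r → m) (g : Fin r → n)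
    (hdet : (M.submatrix f g).det ≠ 0) : r ≤ M.rank := by
  classical
  set R : Matrix (Fin r) m K := Matrix.of (fun i i' => if i' = f i then (1 : K) else 0)
  set C : Matrix n (Fin r) K := Matrix.of (fun j' j => if j' = g j then (1 : K) else 0)
  have hfac : M.submatrix f g = R * M * C := by
    ext i j
    simp only [Matrix.mul_apply, Matrix.of_apply, Matrix.submatrix_apply, R, C,
      ite_mul, one_mul, zero_mul, mul_ite, mul_one, mul_zero]
    simp [Finset.sum_ite_eq, Finset.sum_ite_eq']
  have hrk : (M.submatrix f g).rank = r := by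
    rw [Matrix.rank_of_isUnit _ ((Matrix.isUnit_iff_isUnit_det _).mpr
      (isUnit_iff_ne_zero.mpr hdet)), Fintype.card_fin]
  calc r = (M.submatrix f g).rank := hrk.symm
    _ = (R * M * C).rank := by rw [hfac]
    _ ≤ (R * M).rank := Matrix.rank_mul_le_left _ _
    _ ≤ M.rank := Matrix.rank_mul_le_right _ _

end AuxRank

section AuxPoly

open MvPolynomial

/-- The variable index type for Version II tensor entries. -/
abbrev VarIdx : Type := Σ B : (Σ d : ℕ, Fin d → ℕ), ((i : Fin B.1) → Fin (B.2 i))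

/-- The matrix of polynomials whose evaluation at a tensor family gives `βII`. -/
noncomputable def Ppoly (N : TN) (L : N.LocalOrdering) :
    Matrix N.OutIdx N.InIdx (MvPolynomial VarIdx ℚ) :=
  fun iT iS => ∑ W : (e : N.E) → Fin (N.c e),
    if (∀ u : N.S, W (N.inEdge u) = iS u) ∧ (∀ u : N.T, W (N.outEdge u) = iT u) then
      ∏ v : N.V, MvPolynomial.X ⟨N.valenceType L v, fun i => W ((L v i).1.1)⟩
    else 0

lemma βII_eq_map (N : TN) (L : N.LocalOrdering) (𝒯 : TN.AssignmentII) :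
    N.βII L 𝒯 = (Ppoly N L).map
      (MvPolynomial.aeval (fun x : VarIdx => 𝒯 x.1 x.2)) := by
  ext iT iS
  simp only [TN.βII, Ppoly, Matrix.map_apply, map_sum]
  refine Finset.sum_congr rfl fun W _ => ?_
  split_ifs with h
  · rw [map_prod]
    refine Finset.prod_congr rfl fun v _ => ?_
    rw [MvPolynomial.aeval_X]
  · exact (map_zero _).symm

end AuxPoly

/-- A fixed tensor family whose entries are algebraically independent over `ℚ` realizes the
Version II quantum max-flow of every tensor network simultaneously. -/
theorem stmt_19 (N : TN) (L : N.LocalOrdering) (𝒯₀ : TN.AssignmentII)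
    (hind : AlgebraicIndependent ℚ
      (fun x : Σ B : (Σ d : ℕ, Fin d → ℕ), ((i : Fin B.1) → Fin (B.2 i)) =>
        𝒯₀ x.1 x.2)) :
    (N.βII L 𝒯₀).rank = N.QMFII L := by
  have hinj : Function.Injective
      (MvPolynomial.aeval (fun x : VarIdx => 𝒯₀ x.1 x.2) : MvPolynomial VarIdx ℚ →ₐ[ℚ] ℂ) :=
    hind
  have key : ∀ 𝒯 : TN.AssignmentII, (N.βII L 𝒯).rank ≤ (N.βII L 𝒯₀).rank := by
    intro 𝒯
    obtain ⟨f, g, hdet⟩ := aux_rank_minor (N.βII L 𝒯)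
    have hdet' : ∀ 𝒮 : TN.AssignmentII, ((N.βII L 𝒮).submatrix f g).det =
        (MvPolynomial.aeval (fun x : VarIdx => 𝒮 x.1 x.2) : MvPolynomial VarIdx ℚ →ₐ[ℚ] ℂ)
          (((Ppoly N L).submatrix f g).det) := by
      intro 𝒮
      rw [βII_eq_map N L 𝒮]
      rw [Matrix.submatrix_map]
      exact ((MvPolynomial.aeval (fun x : VarIdx => 𝒮 x.1 x.2) :
        MvPolynomial VarIdx ℚ →ₐ[ℚ] ℂ).toRingHom.map_det _).symm
    have hq : ((Ppoly N L).submatrix f g).det ≠ 0 := by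
      intro h
      apply hdet
      rw [hdet' 𝒯, h, map_zero]
    have h2 : ((N.βII L 𝒯₀).submatrix f g).det ≠ 0 := by
      rw [hdet' 𝒯₀]
      intro h
      exact hq (hinj (h.trans (map_zero _).symm))
    exact aux_minor_rank _ f g h2
  apply le_antisymm
  · exact le_csSup ⟨(N.βII L 𝒯₀).rank, fun r hr => by
      obtain ⟨𝒯, h⟩ := hr; exact h ▸ key 𝒯⟩ ⟨𝒯₀, rfl⟩
  · exact csSup_le ⟨_, ⟨𝒯₀, rfl⟩⟩ (fun r hr => by
      obtain ⟨𝒯, h⟩ := hr; exact h ▸ key 𝒯)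
end
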